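/- arXiv:1706.07669 — 9 statements merged into one kernel-verified Lean document; each statement's English description precedes it below -/
import Mathlib

section
/- For any δ > 0, any k ∈ ℕ with k ≥ 1, and any f ∈ F_k(H), the noise sensitivity satisfies NS_δ(f;H) ≤ (k−1)·δ/2. -/
open MeasureTheory Set

noncomputable section

open scoped Classical

/-- Distance between two functions under the uniform distribution on (0,1):
`P(x : f(x) ≠ g(x))`. -/
def distP {Y : Type*} (f g : ℝ → Y) : ℝ :=
  (volume {x : ℝ | x ∈ Set.Ioo (0:ℝ) 1 ∧ f x ≠ g x}).toReal

/-- Distance of `f` from a class of functions `F`: `inf_{g ∈ F} dist(f,g)`. -/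
def distToClass {Y : Type*} (f : ℝ → Y) (F : Set (ℝ → Y)) : ℝ :=
  ⨅ g : F, distP f g

/-- The zero-measure crossings property. -/
def ZeroMeasureCrossings {Y : Type*} (H : Set (ℝ → Y)) : Prop :=
  ∀ h ∈ H, ∀ h' ∈ H, h ≠ h' → volume {x : ℝ | h x = h' x} = 0

/-- `f` is a `k`-piecewise function with pieces from `H`: there are thresholds
`t 0 = -∞ ≤ t 1 ≤ ⋯ ≤ t (k-1) ≤ t k = ∞` (with `t i` real for `1 ≤ i ≤ k-1`)
and functions `h 1, …, h k ∈ H` with `f x = h i x` whenever `t (i-1) < x ≤ t i`. -/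
def Piecewise {Y : Type*} (H : Set (ℝ → Y)) (k : ℕ) (f : ℝ → Y) : Prop :=
  ∃ (t : ℕ → EReal) (h : ℕ → ℝ → Y),
    t 0 = ⊥ ∧ t k = ⊤ ∧
    (∀ i : ℕ, t i ≤ t (i + 1)) ∧
    (∀ i : ℕ, 1 ≤ i → i ≤ k - 1 → ∃ r : ℝ, t i = (r : EReal)) ∧
    (∀ i : ℕ, 1 ≤ i → i ≤ k → h i ∈ H) ∧
    (∀ x : ℝ, ∀ i : ℕ, 1 ≤ i → i ≤ k →
      t (i - 1) < (x : EReal) → (x : EReal) ≤ t i → f x = h i x)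

/-- The class `F_k(H)` of `k`-piecewise functions with pieces in `H`. -/
def Fclass {Y : Type*} (H : Set (ℝ → Y)) (k : ℕ) : Set (ℝ → Y) :=
  {f | Piecewise H k f}

/-- The instantaneous noise sensitivity `NS_δ(f, x; H)`:
`inf_{h ∈ H, h(x) = f(x)} P(h(x') ≠ f(x'))` with `x' ~ Uniform(x-δ, x+δ)`,
defined to be `1` when no `h ∈ H` has `h x = f x`. -/
def insNS {Y : Type*} (H : Set (ℝ → Y)) (δ : ℝ) (f : ℝ → Y) (x : ℝ) : ℝ :=
  if ({h : ℝ → Y | h ∈ H ∧ h x = f x}).Nonempty then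
    ⨅ h : {h : ℝ → Y | h ∈ H ∧ h x = f x},
      (volume {t : ℝ | t ∈ Set.Ioo (x - δ) (x + δ) ∧ (h : ℝ → Y) t ≠ f t}).toReal / (2 * δ)
  else 1

/-- The noise sensitivity `NS_δ(f; H) = ∫₀¹ NS_δ(f, z; H) dz`. -/
def NS {Y : Type*} (H : Set (ℝ → Y)) (δ : ℝ) (f : ℝ → Y) : ℝ :=
  ∫ z in Set.Ioo (0:ℝ) 1, insNS H δ f z

/-- The smoothed agreement function `f_δ^h(x) = (1/(2δ)) ∫_{x-δ}^{x+δ} 1[f(t) = h(t)] dt`. -/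
def smooth {Y : Type*} (δ : ℝ) (f h : ℝ → Y) (x : ℝ) : ℝ :=
  (1 / (2 * δ)) * ∫ t in (x - δ)..(x + δ), (if f t = h t then (1:ℝ) else 0)

/-- The degree-at-most-`p` polynomial function with coefficients `α`. -/
def polyFun (p : ℕ) (α : Fin (p + 1) → ℝ) : ℝ → ℝ :=
  fun x => ∑ i : Fin (p + 1), α i * x ^ (i : ℕ)

/-- A collection `C` of subsets of `Z` shatters a finite set `S`. -/
def ShattersC {Z : Type*} (C : Set (Set Z)) (S : Finset Z) : Prop :=
  ∀ T : Finset Z, T ⊆ S → ∃ c ∈ C, (S : Set Z) ∩ c = (T : Set Z)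

/-- The graph `{(x, g(x)) : x ∈ ℝ}` of a function `g : ℝ → Y`. -/
def graphOf {Y : Type*} (g : ℝ → Y) : Set (ℝ × Y) :=
  {p : ℝ × Y | p.2 = g p.1}

/-- The collection of graphs of the functions in `G`. -/
def graphs {Y : Type*} (G : Set (ℝ → Y)) : Set (Set (ℝ × Y)) :=
  {s | ∃ g ∈ G, s = graphOf g}

end

namespace NSProofAux
open MeasureTheory Set intervalIntegral
noncomputable section

lemma hat_cont (δ r : ℝ) : Continuous (fun z : ℝ => max 0 (δ - |z - r|)) := by
  fun_prop

lemma hat_compactSupport (δ r : ℝ) :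
    HasCompactSupport (fun z : ℝ => max 0 (δ - |z - r|)) := by
  apply HasCompactSupport.intro (isCompact_Icc (a := r - δ) (b := r + δ))
  intro x hx
  simp only [mem_Icc, not_and_or, not_le] at hx
  have hd : δ < |x - r| := by
    rcases hx with h | h
    · rw [abs_sub_comm, lt_abs]; left; linarith
    · rw [lt_abs]; left; linarith
  exact max_eq_left (by linarith)

lemma hat_integrable (δ r : ℝ) :
    Integrable (fun z : ℝ => max 0 (δ - |z - r|)) := by
  exact (hat_cont δ r).integrable_of_hasCompactSupport (hat_compactSupport δ r)

lemma hat_integral (δ r : ℝ) (hδ : 0 < δ) :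
    (∫ z : ℝ, max 0 (δ - |z - r|)) = δ ^ 2 := by
  have hvanish : ∀ x ∉ Ioc (r - δ) (r + δ), max 0 (δ - |x - r|) = 0 := by
    intro x hx
    simp only [mem_Ioc, not_and_or, not_lt, not_le] at hx
    have hd : δ ≤ |x - r| := by
      rcases hx with h | h
      · rw [abs_sub_comm, le_abs]; left; linarith
      · rw [le_abs]; left; linarith
    exact max_eq_left (by linarith)
  rw [← setIntegral_eq_integral_of_forall_compl_eq_zero hvanish,
     ← intervalIntegral.integral_of_le (by linarith : r - δ ≤ r + δ)]
  have i1 : IntervalIntegrable (fun z : ℝ => max 0 (δ - |z - r|)) volume (r - δ) r :=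
    (hat_cont δ r).intervalIntegrable _ _
  have i2 : IntervalIntegrable (fun z : ℝ => max 0 (δ - |z - r|)) volume r (r + δ) :=
    (hat_cont δ r).intervalIntegrable _ _
  rw [← intervalIntegral.integral_add_adjacent_intervals i1 i2]
  have e1 : (∫ z in (r - δ)..r, max 0 (δ - |z - r|)) = ∫ z in (r - δ)..r, (z - (r - δ)) := by
    apply intervalIntegral.integral_congr
    intro z hz
    rw [uIcc_of_le (by linarith : r - δ ≤ r), mem_Icc] at hz
    have h1 : |z - r| = r - z := by rw [abs_sub_comm]; exact abs_of_nonneg (by linarith)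
    show max 0 (δ - |z - r|) = z - (r - δ)
    rw [h1]
    have := max_eq_right (show (0:ℝ) ≤ δ - (r - z) by linarith)
    rw [this]; ring
  have e2 : (∫ z in r..(r + δ), max 0 (δ - |z - r|)) = ∫ z in r..(r + δ), ((r + δ) - z) := by
    apply intervalIntegral.integral_congr
    intro z hz
    rw [uIcc_of_le (by linarith : r ≤ r + δ), mem_Icc] at hz
    have h1 : |z - r| = z - r := abs_of_nonneg (by linarith)
    show max 0 (δ - |z - r|) = (r + δ) - z
    rw [h1]
    have := max_eq_right (show (0:ℝ) ≤ δ - (z - r) by linarith)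
    rw [this]; ring
  rw [e1, e2,
    intervalIntegral.integral_sub intervalIntegral.intervalIntegrable_id
      (intervalIntegrable_const),
    intervalIntegral.integral_sub (intervalIntegrable_const)
      intervalIntegral.intervalIntegrable_id,
    integral_id, integral_id,
    intervalIntegral.integral_const, intervalIntegral.integral_const]
  simp only [smul_eq_mul]
  ring

end
end NSProofAux

open NSProofAux in

/-- For any `δ > 0`, `k ≥ 1`, and `f ∈ F_k(H)`,
`NS_δ(f; H) ≤ (k-1)·δ/2`. -/
theorem noise_sensitivity_of_piecewise_le
    {Y : Type*} [MeasurableSpace Y] [MeasurableSingletonClass Y] [Nonempty Y]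
    (H : Set (ℝ → Y)) (hHne : H.Nonempty) (hHmeas : ∀ h ∈ H, Measurable h)
    (hzmc : ZeroMeasureCrossings H)
    (δ : ℝ) (hδ : 0 < δ) (k : ℕ) (hk : 1 ≤ k)
    (f : ℝ → Y) (hf : f ∈ Fclass H k) :
    NS H δ f ≤ ((k : ℝ) - 1) * δ / 2 := by
  have hat_integrable := fun r : ℝ => NSProofAux.hat_integrable δ r
  have hat_integral := fun r : ℝ => NSProofAux.hat_integral δ r hδ
  rw [NS]
  obtain ⟨t, h, ht0, htk, htstep, htreal, hhH, hpiece⟩ := hf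
  have hδ' : δ ≠ 0 := ne_of_gt hδ
  set r : ℕ → ℝ := fun j => if hj : 1 ≤ j ∧ j ≤ k - 1 then (htreal j hj.1 hj.2).choose else 0
    with hrdef
  have hrspec : ∀ j, 1 ≤ j → j ≤ k - 1 → t j = ((r j : ℝ) : EReal) := by
    intro j h1 h2
    simp only [hrdef, dif_pos (And.intro h1 h2)]
    exact (htreal j h1 h2).choose_spec
  set B : ℕ → ℝ → ℝ := fun j z => max 0 (δ - |z - r j|) with hBdef
  have hBnn : ∀ j z, 0 ≤ B j z := fun j z => le_max_left _ _
  -- pointwise bound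
  have key : ∀ z : ℝ, insNS H δ f z ≤ (∑ j ∈ Finset.Icc 1 (k-1), B j z) / (2*δ) := by
    intro z
    have hex : ∃ j, ((z : ℝ) : EReal) ≤ t j := ⟨k, by rw [htk]; exact le_top⟩
    set i := Nat.find hex with hidef
    have hiP : ((z : ℝ) : EReal) ≤ t i := Nat.find_spec hex
    have hik : i ≤ k := Nat.find_le (by rw [htk]; exact le_top)
    have hi1 : 1 ≤ i := by
      rcases Nat.eq_zero_or_pos i with h0 | h1
      · exfalso
        rw [h0, ht0, le_bot_iff] at hiP
        exact EReal.coe_ne_bot z hiP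
      · exact h1
    have hlt : t (i-1) < ((z : ℝ) : EReal) := lt_of_not_ge (Nat.find_min hex (by omega))
    have hfz : f z = h i z := hpiece z i hi1 hik hlt hiP
    have hmem : h i ∈ {h' : ℝ → Y | h' ∈ H ∧ h' z = f z} := ⟨hhH i hi1 hik, hfz.symm⟩
    simp only [insNS]
    rw [if_pos ⟨h i, hmem⟩]
    have hbdd : BddBelow (Set.range fun h' : {h' : ℝ → Y | h' ∈ H ∧ h' z = f z} =>
        (volume {x : ℝ | x ∈ Set.Ioo (z - δ) (z + δ) ∧ (h' : ℝ → Y) x ≠ f x}).toReal / (2*δ)) := by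
      refine ⟨0, ?_⟩
      rintro x ⟨y, rfl⟩
      positivity
    refine le_trans (ciInf_le hbdd ⟨h i, hmem⟩) ?_
    rw [div_le_div_iff_of_pos_right (by linarith : (0:ℝ) < 2*δ)]
    set S := {x : ℝ | x ∈ Set.Ioo (z - δ) (z + δ) ∧ h i x ≠ f x} with hSdef
    set A := {x : ℝ | x ∈ Set.Ioo (z - δ) (z + δ) ∧ ((x : ℝ) : EReal) ≤ t (i-1)} with hAdef
    set C := {x : ℝ | x ∈ Set.Ioo (z - δ) (z + δ) ∧ t i < ((x : ℝ) : EReal)} with hCdef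
    have hsub : S ⊆ A ∪ C := by
      rintro x ⟨hxw, hxne⟩
      rcases le_or_gt ((x : ℝ) : EReal) (t (i-1)) with hle | hgt
      · exact Or.inl ⟨hxw, hle⟩
      rcases le_or_gt ((x : ℝ) : EReal) (t i) with hle2 | hgt2
      · exact absurd (hpiece x i hi1 hik hgt hle2).symm hxne
      · exact Or.inr ⟨hxw, hgt2⟩
    have hAbound : 2 ≤ i → volume A ≤ ENNReal.ofReal (B (i-1) z) := by
      intro h2
      have hspec := hrspec (i-1) (by omega) (by omega)
      have hzr : r (i-1) < z := by
        rw [hspec] at hlt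
        exact_mod_cast hlt
      have hAsub : A ⊆ Set.Ioc (z - δ) (r (i-1)) := by
        rintro x ⟨hx1, hx3⟩
        rw [hspec] at hx3
        exact ⟨hx1.1, by exact_mod_cast hx3⟩
      calc volume A ≤ volume (Set.Ioc (z - δ) (r (i-1))) := measure_mono hAsub
        _ = ENNReal.ofReal (r (i-1) - (z - δ)) := Real.volume_Ioc
        _ ≤ ENNReal.ofReal (B (i-1) z) := by
            apply ENNReal.ofReal_le_ofReal
            have habs : |z - r (i-1)| = z - r (i-1) := abs_of_pos (by linarith)
            simp only [hBdef, habs]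
            have := le_max_right (0:ℝ) (δ - (z - r (i-1)))
            linarith
    have hAempty : i = 1 → volume A = 0 := by
      intro h1
      have : A = ∅ := by
        apply eq_empty_iff_forall_notMem.2
        rintro x ⟨_, hx⟩
        rw [h1] at hx
        simp only [Nat.sub_self, ht0, le_bot_iff] at hx
        exact EReal.coe_ne_bot x hx
      rw [this, measure_empty]
    have hCbound : i ≤ k - 1 → volume C ≤ ENNReal.ofReal (B i z) := by
      intro hik1
      have hspec := hrspec i hi1 hik1
      have hzr : z ≤ r i := by
        rw [hspec] at hiP
        exact_mod_cast hiP
      have hCsub : C ⊆ Set.Ioo (r i) (z + δ) := by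
        rintro x ⟨hx1, hx3⟩
        rw [hspec] at hx3
        exact ⟨by exact_mod_cast hx3, hx1.2⟩
      calc volume C ≤ volume (Set.Ioo (r i) (z + δ)) := measure_mono hCsub
        _ = ENNReal.ofReal (z + δ - r i) := Real.volume_Ioo
        _ ≤ ENNReal.ofReal (B i z) := by
            apply ENNReal.ofReal_le_ofReal
            have habs : |z - r i| = r i - z := by
              rw [abs_sub_comm]; exact abs_of_nonneg (by linarith)
            simp only [hBdef, habs]
            have := le_max_right (0:ℝ) (δ - (r i - z))
            linarith
    have hCempty : i = k → volume C = 0 := by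
      intro hkk
      have : C = ∅ := by
        apply eq_empty_iff_forall_notMem.2
        rintro x ⟨_, hx⟩
        rw [hkk, htk] at hx
        exact not_top_lt hx
      rw [this, measure_empty]
    have hS : volume S ≤ ENNReal.ofReal (∑ j ∈ Finset.Icc 1 (k-1), B j z) := by
      refine le_trans (le_trans (measure_mono hsub) (measure_union_le A C)) ?_
      by_cases h2 : 2 ≤ i
      · by_cases hik1 : i ≤ k - 1
        · calc volume A + volume C ≤ ENNReal.ofReal (B (i-1) z) + ENNReal.ofReal (B i z) :=
              add_le_add (hAbound h2) (hCbound hik1)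
            _ = ENNReal.ofReal (B (i-1) z + B i z) :=
              (ENNReal.ofReal_add (hBnn _ _) (hBnn _ _)).symm
            _ ≤ ENNReal.ofReal (∑ j ∈ Finset.Icc 1 (k-1), B j z) := by
              apply ENNReal.ofReal_le_ofReal
              have hne : (i-1) ≠ i := by omega
              rw [show B (i-1) z + B i z = ∑ j ∈ ({i-1, i} : Finset ℕ), B j z from
                (Finset.sum_pair (f := fun j => B j z) hne).symm]
              apply Finset.sum_le_sum_of_subset_of_nonneg
              · intro j hj
                simp only [Finset.mem_insert, Finset.mem_singleton] at hj
                rcases hj with rfl | rfl <;> exact Finset.mem_Icc.2 ⟨by omega, by omega⟩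
              · intro j _ _; exact hBnn j z
        · have hieq : i = k := by omega
          rw [hCempty hieq, add_zero]
          exact (hAbound h2).trans (ENNReal.ofReal_le_ofReal
            (Finset.single_le_sum (fun j _ => hBnn j z) (Finset.mem_Icc.2 ⟨by omega, by omega⟩)))
      · have hieq : i = 1 := by omega
        rw [hAempty hieq, zero_add]
        by_cases hik1 : i ≤ k - 1
        · exact (hCbound hik1).trans (ENNReal.ofReal_le_ofReal
            (Finset.single_le_sum (fun j _ => hBnn j z) (Finset.mem_Icc.2 ⟨hi1, hik1⟩)))
        · have hieq2 : i = k := by omega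
          rw [hCempty hieq2]
          exact zero_le
    exact ENNReal.toReal_le_of_le_ofReal (Finset.sum_nonneg fun j _ => hBnn j z) hS
  -- integration
  have hNSnn : ∀ z : ℝ, 0 ≤ insNS H δ f z := by
    intro z
    simp only [insNS]
    split
    · exact Real.iInf_nonneg fun h' => by positivity
    · exact zero_le_one
  have hgcont : Continuous fun z : ℝ => (∑ j ∈ Finset.Icc 1 (k-1), B j z) / (2*δ) := by
    apply Continuous.div_const
    exact continuous_finset_sum _ fun j _ => hat_cont δ (r j)
  have hgint : IntegrableOn (fun z : ℝ => (∑ j ∈ Finset.Icc 1 (k-1), B j z)/(2*δ))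
      (Set.Ioo 0 1) :=
    (hgcont.integrableOn_Icc (a := 0) (b := 1)).mono_set Set.Ioo_subset_Icc_self
  refine le_trans (integral_mono_of_nonneg (Filter.Eventually.of_forall hNSnn) hgint
    (Filter.Eventually.of_forall key)) ?_
  have hsum : (∫ z in Set.Ioo (0:ℝ) 1, (∑ j ∈ Finset.Icc 1 (k-1), B j z)/(2*δ))
      ≤ (((k-1 : ℕ) : ℝ) * δ^2) / (2*δ) := by
    rw [MeasureTheory.integral_div]
    gcongr
    rw [integral_finset_sum _ (fun j _ => ((hat_integrable (r j)).integrableOn))]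
    calc ∑ j ∈ Finset.Icc 1 (k-1), ∫ z in Set.Ioo (0:ℝ) 1, B j z
        ≤ ∑ _j ∈ Finset.Icc 1 (k-1), δ^2 := Finset.sum_le_sum (fun j _ => by
          rw [← hat_integral (r j)]
          exact setIntegral_le_integral (hat_integrable (r j))
            (Filter.Eventually.of_forall fun z => hBnn j z))
      _ = ((k-1 : ℕ) : ℝ) * δ^2 := by
          rw [Finset.sum_const, Nat.card_Icc]
          simp [nsmul_eq_mul]
  refine hsum.trans (le_of_eq ?_)
  have hcast : ((k-1 : ℕ) : ℝ) = (k : ℝ) - 1 := by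
    rw [Nat.cast_sub hk, Nat.cast_one]
  rw [hcast]
  field_simp
end

section
/- Fix δ > 0, a measurable f : ℝ → Y, and x ∈ ℝ. For any finite set S ⊆ H of pairwise distinct functions, Σ_{h ∈ S} f_δ^h(x) ≤ 1. In particular, at most one h ∈ H has f_δ^h(x) > 1/2. -/
open MeasureTheory Set

lemma sum_lintegral_le' {ι : Type*} (S : Finset ι) (μ : Measure ℝ) (F : ι → ℝ → ENNReal) :
    ∑ i ∈ S, ∫⁻ t, F i t ∂μ ≤ ∫⁻ t, ∑ i ∈ S, F i t ∂μ := by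
  classical
  induction S using Finset.induction with
  | empty => simp
  | @insert a S ha ih =>
    rw [Finset.sum_insert ha]
    calc (∫⁻ t, F a t ∂μ) + ∑ i ∈ S, ∫⁻ t, F i t ∂μ
        ≤ (∫⁻ t, F a t ∂μ) + ∫⁻ t, ∑ i ∈ S, F i t ∂μ := by gcongr
      _ ≤ ∫⁻ t, (F a t + ∑ i ∈ S, F i t) ∂μ := le_lintegral_add _ _
      _ = ∫⁻ t, ∑ i ∈ insert a S, F i t ∂μ := by
          simp [Finset.sum_insert ha]

/-- For any finite set `S ⊆ H`, `Σ_{h ∈ S} f_δ^h(x) ≤ 1`; in particular,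
at most one `h ∈ H` has `f_δ^h(x) > 1/2`. -/
theorem sum_smooth_le_one
    {Y : Type*} [MeasurableSpace Y] [MeasurableSingletonClass Y] [Nonempty Y]
    (H : Set (ℝ → Y)) (hHne : H.Nonempty) (hHmeas : ∀ h ∈ H, Measurable h)
    (hzmc : ZeroMeasureCrossings H)
    (δ : ℝ) (hδ : 0 < δ) (f : ℝ → Y) (hf : Measurable f) (x : ℝ) :
    (∀ S : Finset (ℝ → Y), ↑S ⊆ H → ∑ h ∈ S, smooth δ f h x ≤ 1) ∧
    (∀ h ∈ H, ∀ h' ∈ H, 1 / 2 < smooth δ f h x → 1 / 2 < smooth δ f h' x → h = h') := by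
  classical
  have key : ∀ S : Finset (ℝ → Y), ↑S ⊆ H → ∑ h ∈ S, smooth δ f h x ≤ 1 := by
    intro S hS
    set a := x - δ with ha
    set b := x + δ with hb
    have hab : a ≤ b := by simp only [ha, hb]; linarith
    have h2δ : (0:ℝ) < 2 * δ := by linarith
    set μ := volume.restrict (Set.Ioc a b) with hμ
    set ind : (ℝ → Y) → ℝ → ENNReal := fun h t => if f t = h t then 1 else 0 with hind
    set L : (ℝ → Y) → ENNReal := fun h => ∫⁻ t, ind h t ∂μ with hL
    -- each smooth ≤ (1/(2δ)) * (L h).toReal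
    have step1 : ∀ h : ℝ → Y, smooth δ f h x ≤ (1 / (2 * δ)) * (L h).toReal := by
      intro h
      set g : ℝ → ℝ := fun t => if f t = h t then (1:ℝ) else 0 with hg
      have hsm : smooth δ f h x = (1 / (2 * δ)) * ∫ t, g t ∂μ := by
        rw [smooth, intervalIntegral.integral_of_le hab]
      by_cases hm : AEStronglyMeasurable g μ
      · have hnn : 0 ≤ᵐ[μ] g := Filter.Eventually.of_forall (by
          intro t; by_cases hc : f t = h t <;> simp [hg, hc])
        have : ∫ t, g t ∂μ = (∫⁻ t, ENNReal.ofReal (g t) ∂μ).toReal :=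
          integral_eq_lintegral_of_nonneg_ae hnn hm
        rw [hsm, this]
        have hcongr : (fun t => ENNReal.ofReal (g t)) = ind h := by
          funext t; by_cases hc : f t = h t <;> simp [hg, hind, hc]
        rw [hcongr]
      · rw [hsm, integral_non_aestronglyMeasurable hm, mul_zero]
        positivity
    -- L h is bounded by volume of interval
    have hvol : μ Set.univ = ENNReal.ofReal (2 * δ) := by
      simp [hμ, Real.volume_Ioc]
      congr 1
      simp only [ha, hb]; ring_nf; rw [ENNReal.ofReal_mul' (by norm_num), ENNReal.ofReal_ofNat]
    have hLle : ∀ h : ℝ → Y, L h ≤ ENNReal.ofReal (2 * δ) := by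
      intro h
      calc L h ≤ ∫⁻ _, 1 ∂μ := by
            apply lintegral_mono; intro t
            by_cases hc : f t = h t <;> simp [hind, hc]
        _ = μ Set.univ := by simp
        _ = ENNReal.ofReal (2 * δ) := hvol
    have hLne : ∀ h : ℝ → Y, L h ≠ ⊤ := fun h =>
      ne_top_of_le_ne_top ENNReal.ofReal_ne_top (hLle h)
    -- a.e. bound on the sum of indicators
    have hae : ∀ᵐ t ∂μ, ∀ h ∈ S, ∀ h' ∈ S, h ≠ h' → h t ≠ h' t := by
      have : ∀ h ∈ S, ∀ h' ∈ S, h ≠ h' → ∀ᵐ t ∂μ, h t ≠ h' t := by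
        intro h hh h' hh' hne
        have hz : volume {t : ℝ | h t = h' t} = 0 :=
          hzmc h (hS hh) h' (hS hh') hne
        have hz' : μ {t : ℝ | h t = h' t} = 0 :=
          le_antisymm (le_trans (Measure.restrict_le_self _) hz.le) zero_le
        rw [ae_iff]
        simpa using hz'
      refine (ae_ball_iff S.countable_toSet).mpr fun h hh => ?_
      refine (ae_ball_iff S.countable_toSet).mpr fun h' hh' => ?_
      by_cases hne : h = h'
      · simp [hne]
      · filter_upwards [this h hh h' hh' hne] with t ht _; exact ht
    have hsumle : ∀ᵐ t ∂μ, ∑ h ∈ S, ind h t ≤ 1 := by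
      filter_upwards [hae] with t ht
      have hcard : (S.filter (fun h => f t = h t)).card ≤ 1 := by
        by_contra hc
        push_neg at hc
        obtain ⟨h, hh, h', hh', hne⟩ := Finset.one_lt_card.mp hc
        simp only [Finset.mem_filter] at hh hh'
        exact ht h hh.1 h' hh'.1 hne (hh.2 ▸ hh'.2 ▸ rfl)
      calc ∑ h ∈ S, ind h t
          = ∑ h ∈ S.filter (fun h => f t = h t), 1 := by
            rw [Finset.sum_filter]
        _ = ((S.filter (fun h => f t = h t)).card : ENNReal) := by simp
        _ ≤ 1 := by exact_mod_cast hcard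
    -- combine
    have hsumL : ∑ h ∈ S, L h ≤ ENNReal.ofReal (2 * δ) := by
      calc ∑ h ∈ S, L h ≤ ∫⁻ t, ∑ h ∈ S, ind h t ∂μ := sum_lintegral_le' S μ ind
        _ ≤ ∫⁻ _, 1 ∂μ := lintegral_mono_ae hsumle
        _ = μ Set.univ := by simp
        _ = ENNReal.ofReal (2 * δ) := hvol
    calc ∑ h ∈ S, smooth δ f h x
        ≤ ∑ h ∈ S, (1 / (2 * δ)) * (L h).toReal := Finset.sum_le_sum fun h _ => step1 h
      _ = (1 / (2 * δ)) * ∑ h ∈ S, (L h).toReal := by rw [Finset.mul_sum]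
      _ = (1 / (2 * δ)) * (∑ h ∈ S, L h).toReal := by
          rw [ENNReal.toReal_sum fun h _ => hLne h]
      _ ≤ (1 / (2 * δ)) * (ENNReal.ofReal (2 * δ)).toReal := by
          refine mul_le_mul_of_nonneg_left ?_ (by positivity)
          exact ENNReal.toReal_mono ENNReal.ofReal_ne_top hsumL
      _ = 1 := by
          rw [ENNReal.toReal_ofReal h2δ.le]
          field_simp
  refine ⟨key, ?_⟩
  intro h hh h' hh' h1 h2
  by_contra hne
  have hsub : ↑({h, h'} : Finset (ℝ → Y)) ⊆ H := by
    intro g hg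
    simp only [Finset.coe_insert, Finset.coe_singleton, Set.mem_insert_iff,
      Set.mem_singleton_iff] at hg
    rcases hg with rfl | rfl <;> assumption
  have := key {h, h'} hsub
  rw [Finset.sum_insert (by simpa using hne), Finset.sum_singleton] at this
  linarith
end

section
/- Fix δ > 0, a measurable f : ℝ → Y, and x ∈ ℝ. Then the supremum sup_{h ∈ H} f_δ^h(x) is attained: there exists h ∈ H with f_δ^h(x) = sup_{h' ∈ H} f_δ^{h'}(x). -/
open MeasureTheory Set

/-- The supremum `sup_{h ∈ H} f_δ^h(x)` is attained by some `h ∈ H`. -/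
theorem smooth_sup_attained
    {Y : Type*} [MeasurableSpace Y] [MeasurableSingletonClass Y] [Nonempty Y]
    (H : Set (ℝ → Y)) (hHne : H.Nonempty) (hHmeas : ∀ h ∈ H, Measurable h)
    (hzmc : ZeroMeasureCrossings H)
    (δ : ℝ) (hδ : 0 < δ) (f : ℝ → Y) (hf : Measurable f) (x : ℝ) :
    ∃ h ∈ H, smooth δ f h x = ⨆ h' : H, smooth δ f h' x := by
  classical
  have hHsub : Nonempty H := hHne.to_subtype
  have h2δ : (0:ℝ) < 2 * δ := by linarith
  set μ := volume.restrict (Set.Ioc (x - δ) (x + δ)) with hμ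
  set B : (ℝ → Y) → Set ℝ := fun h => {t | f t = h t} with hB
  have hμuniv : μ Set.univ = ENNReal.ofReal (2 * δ) := by
    rw [hμ, Measure.restrict_apply_univ, Real.volume_Ioc]
    congr 1; ring
  have hμtop : ∀ s : Set ℝ, μ s ≠ ⊤ := by
    intro s
    exact ne_top_of_le_ne_top (by rw [hμuniv]; exact ENNReal.ofReal_ne_top)
      (measure_mono (Set.subset_univ s))
  have key : ∀ h, smooth δ f h x = 0 ∨
      (MeasureTheory.NullMeasurableSet (B h) μ ∧
        smooth δ f h x = (μ (B h)).toReal / (2 * δ)) := by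
    intro h
    have hint : (∫ t in (x - δ)..(x + δ), (if f t = h t then (1:ℝ) else 0))
        = ∫ t, (B h).indicator (fun _ => (1:ℝ)) t ∂μ := by
      rw [intervalIntegral.integral_of_le (by linarith : x - δ ≤ x + δ)]
      simp only [Set.indicator_apply, hB, Set.mem_setOf_eq, hμ]
    by_cases hI : MeasureTheory.Integrable ((B h).indicator (fun _ => (1:ℝ))) μ
    · right
      have hpre : (B h).indicator (fun _ => (1:ℝ)) ⁻¹' {1} = B h := by
        ext t; by_cases ht : t ∈ B h <;> simp [Set.indicator_apply, ht]
      have hnm : MeasureTheory.NullMeasurableSet (B h) μ := by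
        have := hI.aemeasurable.nullMeasurable (measurableSet_singleton (1:ℝ))
        rwa [hpre] at this
      refine ⟨hnm, ?_⟩
      have hae := hnm.toMeasurable_ae_eq
      have hind : (B h).indicator (fun _ => (1:ℝ))
          =ᵐ[μ] (MeasureTheory.toMeasurable μ (B h)).indicator (fun _ => (1:ℝ)) := by
        filter_upwards [hae.symm.mem_iff] with t ht
        by_cases h1 : t ∈ B h
        · rw [Set.indicator_of_mem h1, Set.indicator_of_mem (ht.mp h1)]
        · rw [Set.indicator_of_notMem h1, Set.indicator_of_notMem (fun hc => h1 (ht.mpr hc))]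
      have : ∫ t, (B h).indicator (fun _ => (1:ℝ)) t ∂μ = (μ (B h)).toReal := by
        rw [MeasureTheory.integral_congr_ae hind,
          MeasureTheory.integral_indicator_const (1:ℝ) (measurableSet_toMeasurable μ (B h)),
          MeasureTheory.measureReal_def, MeasureTheory.measure_toMeasurable, smul_eq_mul, mul_one]
      rw [smooth, hint, this]; ring
    · left
      rw [smooth, hint, MeasureTheory.integral_undef hI, mul_zero]
  have hnonneg : ∀ h, 0 ≤ smooth δ f h x := by
    intro h
    rcases key h with h0 | ⟨_, heq⟩
    · rw [h0]
    · rw [heq]; positivity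
  have hbdd : BddAbove (Set.range fun h' : H => smooth δ f h' x) := by
    refine ⟨1, ?_⟩
    rintro v ⟨h, rfl⟩
    show smooth δ f (h : ℝ → Y) x ≤ 1
    rcases key (h : ℝ → Y) with h0 | ⟨_, heq⟩
    · rw [h0]; norm_num
    · rw [heq]
      rw [div_le_one h2δ]
      have : μ (B (h : ℝ → Y)) ≤ ENNReal.ofReal (2 * δ) := by
        rw [← hμuniv]; exact measure_mono (Set.subset_univ _)
      calc (μ (B (h:ℝ→Y))).toReal ≤ (ENNReal.ofReal (2*δ)).toReal :=
            ENNReal.toReal_mono ENNReal.ofReal_ne_top this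
        _ = 2*δ := ENNReal.toReal_ofReal (le_of_lt h2δ)
  set s := ⨆ h' : H, smooth δ f h' x with hs
  have hub : ∀ h : H, smooth δ f h x ≤ s := fun h => le_ciSup hbdd h
  rcases le_or_gt s 0 with hs0 | hs0
  · obtain ⟨h0, hh0⟩ := hHne
    exact ⟨h0, hh0, le_antisymm (hub ⟨h0, hh0⟩) (le_trans hs0 (hnonneg h0))⟩
  · set S : Set (ℝ → Y) := {h ∈ H | s / 2 < smooth δ f h x} with hS
    have hSne : S.Nonempty := by
      obtain ⟨h, hh⟩ := exists_lt_of_lt_ciSup (show s / 2 < s by linarith)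
      exact ⟨(h : ℝ → Y), h.2, hh⟩
    have hSmeas : ∀ h ∈ S, ENNReal.ofReal (s * δ) ≤ μ (B h) := by
      intro h hh
      rcases key h with h0 | ⟨_, heq⟩
      · exfalso
        have h2 := hh.2; rw [h0] at h2
        exact absurd h2 (by push_neg; positivity)
      · have : s * δ ≤ (μ (B h)).toReal := by
          have := hh.2; rw [heq, lt_div_iff₀ h2δ] at this; nlinarith
        calc ENNReal.ofReal (s * δ) ≤ ENNReal.ofReal ((μ (B h)).toReal) :=
              ENNReal.ofReal_le_ofReal this
          _ = μ (B h) := ENNReal.ofReal_toReal (hμtop _)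
    have hSfin : S.Finite := by
      by_contra hinf
      obtain ⟨T, hTsub, hTcard⟩ :=
        Set.Infinite.exists_subset_card_eq hinf (⌈2 / s⌉₊ + 1)
      have hdisj : (↑T : Set (ℝ → Y)).Pairwise (Function.onFun (MeasureTheory.AEDisjoint μ) B) := by
        intro a ha b hb hab
        have hsub : B a ∩ B b ⊆ {t : ℝ | a t = b t} :=
          fun t ht => ht.1.symm.trans ht.2
        have h0 : volume {t : ℝ | a t = b t} = 0 :=
          hzmc a (hTsub ha).1 b (hTsub hb).1 hab
        exact le_antisymm (le_trans (le_trans (Measure.restrict_le_self _)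
          (measure_mono hsub)) (le_of_eq h0)) zero_le
      have hnms : ∀ h ∈ T, MeasureTheory.NullMeasurableSet (B h) μ := by
        intro h hh
        rcases key h with h0 | ⟨hnm, _⟩
        · exfalso
          have := (hTsub hh).2; rw [h0] at this
          exact absurd this (by push_neg; positivity)
        · exact hnm
      have hsum : ∑ h ∈ T, μ (B h) = μ (⋃ h ∈ T, B h) :=
        (MeasureTheory.measure_biUnion_finset₀ hdisj hnms).symm
      have hle : ∑ h ∈ T, μ (B h) ≤ ENNReal.ofReal (2 * δ) := by
        rw [hsum, ← hμuniv]; exact measure_mono (Set.subset_univ _)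
      have hge : (T.card : ENNReal) * ENNReal.ofReal (s * δ) ≤ ∑ h ∈ T, μ (B h) := by
        have := Finset.card_nsmul_le_sum T (fun h => μ (B h)) (ENNReal.ofReal (s * δ))
          (fun h hh => hSmeas h (hTsub hh))
        rwa [nsmul_eq_mul] at this
      have hcomb : ENNReal.ofReal ((T.card : ℝ) * (s * δ)) ≤ ENNReal.ofReal (2 * δ) := by
        rw [ENNReal.ofReal_mul (by positivity), ENNReal.ofReal_natCast]
        exact le_trans hge hle
      rw [ENNReal.ofReal_le_ofReal_iff (le_of_lt h2δ)] at hcomb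
      have hcard : (2 / s : ℝ) < (T.card : ℝ) := by
        rw [hTcard]; push_cast
        calc (2 / s : ℝ) ≤ (⌈2 / s⌉₊ : ℝ) := Nat.le_ceil _
          _ < (⌈2 / s⌉₊ : ℝ) + 1 := by linarith
      have h1 : 2 / s * (s * δ) < (T.card : ℝ) * (s * δ) :=
        mul_lt_mul_of_pos_right hcard (by positivity)
      have h2 : 2 / s * (s * δ) = 2 * δ := by field_simp
      linarith
    obtain ⟨h, hhS, hmax⟩ := Set.exists_max_image S (fun h => smooth δ f h x) hSfin hSne
    refine ⟨h, hhS.1, le_antisymm (hub ⟨h, hhS.1⟩) ?_⟩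
    apply ciSup_le
    intro h'
    by_cases hh' : (h' : ℝ → Y) ∈ S
    · exact hmax _ hh'
    · have : ¬ (s / 2 < smooth δ f h' x) := fun hc => hh' ⟨h'.2, hc⟩
      push_neg at this
      linarith [hhS.2]
end

section
/- Fix δ > 0, τ ∈ (0,1/2), a measurable f : ℝ → Y, and distinct h, h' ∈ H. If x, z ∈ ℝ satisfy f_δ^h(x) ≥ 1−τ and f_δ^{h'}(z) ≥ 1−τ, then |x − z| ≥ 2δ(1−2τ). -/
open MeasureTheory Set

open scoped Classical

private lemma indic_intervalIntegral_le {g : ℝ → ℝ} (hg : ∀ t, g t ≤ 1) {c d : ℝ}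
    (hcd : c ≤ d) (hint : IntervalIntegrable g volume c d) :
    ∫ t in c..d, g t ≤ d - c := by
  calc ∫ t in c..d, g t ≤ ∫ _t in c..d, (1:ℝ) :=
        intervalIntegral.integral_mono_on hcd hint intervalIntegrable_const (fun t _ => hg t)
    _ = d - c := by simp


/-- If `h ≠ h'` in `H`, `f_δ^h(x) ≥ 1-τ`, and `f_δ^{h'}(z) ≥ 1-τ` for
`τ ∈ (0, 1/2)`, then `|x - z| ≥ 2δ(1-2τ)`. -/
theorem smooth_high_points_far
    {Y : Type*} [MeasurableSpace Y] [MeasurableSingletonClass Y] [Nonempty Y]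
    (H : Set (ℝ → Y)) (hHne : H.Nonempty) (hHmeas : ∀ h ∈ H, Measurable h)
    (hzmc : ZeroMeasureCrossings H)
    (δ : ℝ) (hδ : 0 < δ) (τ : ℝ) (hτ : τ ∈ Set.Ioo (0:ℝ) (1/2))
    (f : ℝ → Y) (hf : Measurable f)
    (h h' : ℝ → Y) (hh : h ∈ H) (hh' : h' ∈ H) (hne : h ≠ h')
    (x z : ℝ) (hx : 1 - τ ≤ smooth δ f h x) (hz : 1 - τ ≤ smooth δ f h' z) :
    2 * δ * (1 - 2 * τ) ≤ |x - z| := by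
  by_contra hcon
  push_neg at hcon
  obtain ⟨hτ0, hτ2⟩ := hτ
  set g1 : ℝ → ℝ := fun t => if f t = h t then 1 else 0 with hg1
  set g2 : ℝ → ℝ := fun t => if f t = h' t then 1 else 0 with hg2
  have hg1le : ∀ t, g1 t ≤ 1 := by intro t; simp only [hg1]; split <;> norm_num
  have hg2le : ∀ t, g2 t ≤ 1 := by intro t; simp only [hg2]; split <;> norm_num
  have hg1nn : ∀ t, 0 ≤ g1 t := by intro t; simp only [hg1]; split <;> norm_num
  have hg2nn : ∀ t, 0 ≤ g2 t := by intro t; simp only [hg2]; split <;> norm_num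
  have h2δ : (0:ℝ) < 2 * δ := by linarith
  have hint1 : IntervalIntegrable g1 volume (x - δ) (x + δ) := by
    by_contra hni
    rw [smooth, intervalIntegral.integral_undef hni, mul_zero] at hx
    linarith
  have hint2 : IntervalIntegrable g2 volume (z - δ) (z + δ) := by
    by_contra hni
    rw [smooth, intervalIntegral.integral_undef hni, mul_zero] at hz
    linarith
  have hI1 : 2 * δ * (1 - τ) ≤ ∫ t in (x - δ)..(x + δ), g1 t := by
    have hx' : 1 - τ ≤ (1 / (2 * δ)) * ∫ t in (x - δ)..(x + δ), g1 t := hx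
    have := mul_le_mul_of_nonneg_left hx' (le_of_lt h2δ)
    calc 2 * δ * (1 - τ) ≤ 2 * δ * ((1 / (2 * δ)) * ∫ t in (x - δ)..(x + δ), g1 t) := this
      _ = ∫ t in (x - δ)..(x + δ), g1 t := by field_simp
  have hI2 : 2 * δ * (1 - τ) ≤ ∫ t in (z - δ)..(z + δ), g2 t := by
    have hz' : 1 - τ ≤ (1 / (2 * δ)) * ∫ t in (z - δ)..(z + δ), g2 t := hz
    have := mul_le_mul_of_nonneg_left hz' (le_of_lt h2δ)
    calc 2 * δ * (1 - τ) ≤ 2 * δ * ((1 / (2 * δ)) * ∫ t in (z - δ)..(z + δ), g2 t) := this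
      _ = ∫ t in (z - δ)..(z + δ), g2 t := by field_simp
  set a : ℝ := max (x - δ) (z - δ) with ha
  set b : ℝ := min (x + δ) (z + δ) with hb
  have ha1 : x - δ ≤ a := le_max_left _ _
  have ha2 : z - δ ≤ a := le_max_right _ _
  have hb1 : b ≤ x + δ := min_le_left _ _
  have hb2 : b ≤ z + δ := min_le_right _ _
  have hba : 4 * δ * τ < b - a := by
    rcases le_total x z with hxz | hxz
    · have haeq : a = z - δ := max_eq_right (by linarith)
      have hbeq : b = x + δ := min_eq_left (by linarith)
      rw [abs_of_nonpos (by linarith)] at hcon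
      rw [haeq, hbeq]; linarith
    · have haeq : a = x - δ := max_eq_left (by linarith)
      have hbeq : b = z + δ := min_eq_right (by linarith)
      rw [abs_of_nonneg (by linarith)] at hcon
      rw [haeq, hbeq]; linarith
  have hδτ : 0 < 4 * δ * τ := by positivity
  have haleb : a ≤ b := by linarith
  -- subinterval integrability for g1
  have hx1 : x - δ ≤ x + δ := by linarith
  have hz1 : z - δ ≤ z + δ := by linarith
  have hsub1ab : IntervalIntegrable g1 volume a b :=
    hint1.mono_set (by rw [Set.uIcc_of_le haleb, Set.uIcc_of_le hx1]; exact Set.Icc_subset_Icc ha1 hb1)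
  have hsub1l : IntervalIntegrable g1 volume (x - δ) a :=
    hint1.mono_set (by rw [Set.uIcc_of_le ha1, Set.uIcc_of_le hx1]; exact Set.Icc_subset_Icc le_rfl (by linarith))
  have hsub1r : IntervalIntegrable g1 volume b (x + δ) :=
    hint1.mono_set (by rw [Set.uIcc_of_le hb1, Set.uIcc_of_le hx1]; exact Set.Icc_subset_Icc (by linarith) le_rfl)
  have hsub1lb : IntervalIntegrable g1 volume (x - δ) b :=
    hint1.mono_set (by rw [Set.uIcc_of_le (le_trans ha1 haleb), Set.uIcc_of_le hx1]; exact Set.Icc_subset_Icc le_rfl hb1)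
  have hsub2ab : IntervalIntegrable g2 volume a b :=
    hint2.mono_set (by rw [Set.uIcc_of_le haleb, Set.uIcc_of_le hz1]; exact Set.Icc_subset_Icc ha2 hb2)
  have hsub2l : IntervalIntegrable g2 volume (z - δ) a :=
    hint2.mono_set (by rw [Set.uIcc_of_le ha2, Set.uIcc_of_le hz1]; exact Set.Icc_subset_Icc le_rfl (by linarith))
  have hsub2r : IntervalIntegrable g2 volume b (z + δ) :=
    hint2.mono_set (by rw [Set.uIcc_of_le hb2, Set.uIcc_of_le hz1]; exact Set.Icc_subset_Icc (by linarith) le_rfl)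
  have hsub2lb : IntervalIntegrable g2 volume (z - δ) b :=
    hint2.mono_set (by rw [Set.uIcc_of_le (le_trans ha2 haleb), Set.uIcc_of_le hz1]; exact Set.Icc_subset_Icc le_rfl hb2)
  -- splitting the integrals
  have hsplit1 : (∫ t in (x - δ)..a, g1 t) + (∫ t in a..b, g1 t) + (∫ t in b..(x + δ), g1 t)
      = ∫ t in (x - δ)..(x + δ), g1 t := by
    rw [intervalIntegral.integral_add_adjacent_intervals hsub1l hsub1ab,
        intervalIntegral.integral_add_adjacent_intervals hsub1lb hsub1r]
  have hsplit2 : (∫ t in (z - δ)..a, g2 t) + (∫ t in a..b, g2 t) + (∫ t in b..(z + δ), g2 t)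
      = ∫ t in (z - δ)..(z + δ), g2 t := by
    rw [intervalIntegral.integral_add_adjacent_intervals hsub2l hsub2ab,
        intervalIntegral.integral_add_adjacent_intervals hsub2lb hsub2r]
  have hside1l : ∫ t in (x - δ)..a, g1 t ≤ a - (x - δ) :=
    indic_intervalIntegral_le hg1le ha1 hsub1l
  have hside1r : ∫ t in b..(x + δ), g1 t ≤ (x + δ) - b :=
    indic_intervalIntegral_le hg1le hb1 hsub1r
  have hside2l : ∫ t in (z - δ)..a, g2 t ≤ a - (z - δ) :=
    indic_intervalIntegral_le hg2le ha2 hsub2l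
  have hside2r : ∫ t in b..(z + δ), g2 t ≤ (z + δ) - b :=
    indic_intervalIntegral_le hg2le hb2 hsub2r
  have hmid1 : (b - a) - 2 * δ * τ ≤ ∫ t in a..b, g1 t := by linarith
  have hmid2 : (b - a) - 2 * δ * τ ≤ ∫ t in a..b, g2 t := by linarith
  -- a.e. bound g1 + g2 ≤ 1
  have hzero : volume {t : ℝ | h t = h' t} = 0 := hzmc h hh h' hh' hne
  have haene : ∀ᵐ t : ℝ, h t ≠ h' t := by
    rw [MeasureTheory.ae_iff]
    convert hzero using 2
    simp [not_not]
  have hae : (fun t => g1 t + g2 t) ≤ᵐ[volume] fun _ => (1:ℝ) := by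
    filter_upwards [haene] with t ht
    simp only [hg1, hg2]
    split_ifs with p q
    · exact absurd (p.symm.trans q) ht
    · norm_num
    · norm_num
    · norm_num
  have hsum : (∫ t in a..b, (g1 t + g2 t)) ≤ b - a := by
    have := intervalIntegral.integral_mono_ae haleb (hsub1ab.add hsub2ab)
      intervalIntegrable_const hae
    simpa using this
  have hadd : (∫ t in a..b, (g1 t + g2 t)) = (∫ t in a..b, g1 t) + ∫ t in a..b, g2 t :=
    intervalIntegral.integral_add hsub1ab hsub2ab
  linarith
end

section
/- For any m, k ∈ ℕ with 1 ≤ k ≤ m+1 and any g ∈ F_{m+1}(H), we have dist(g, F_k(H)) ≤ ((m+1) − k)/(m+1). -/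
open MeasureTheory Set

open MeasureTheory Set
open scoped ENNReal

lemma exists_light_subset (w : ℕ → ℝ) :
    ∀ (j : ℕ) (F : Finset ℕ), (∀ i ∈ F, 0 ≤ w i) → j ≤ F.card →
      ∃ D : Finset ℕ, D ⊆ F ∧ D.card = j ∧
        (F.card : ℝ) * ∑ i ∈ D, w i ≤ (j : ℝ) * ∑ i ∈ F, w i := by
  intro j
  induction j with
  | zero =>
      intro F hw _
      exact ⟨∅, Finset.empty_subset _, rfl, by simp⟩
  | succ j ih =>
      intro F hw hcard
      have hFne : F.Nonempty := Finset.card_pos.mp (by omega)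
      obtain ⟨a, haF, hamin⟩ := F.exists_min_image w hFne
      have h1n : 1 ≤ F.card := Finset.card_pos.mpr hFne
      obtain ⟨D', hD'F, hD'card, hD'⟩ := ih (F.erase a)
        (fun i hi => hw i (Finset.erase_subset _ _ hi))
        (by rw [Finset.card_erase_of_mem haF]; omega)
      have haD' : a ∉ D' := fun hmem => (Finset.mem_erase.mp (hD'F hmem)).1 rfl
      refine ⟨insert a D', Finset.insert_subset haF (hD'F.trans (Finset.erase_subset _ _)), ?_, ?_⟩
      · rw [Finset.card_insert_of_notMem haD', hD'card]
      · have hsum1 : ∑ i ∈ insert a D', w i = w a + ∑ i ∈ D', w i :=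
          Finset.sum_insert haD'
        have hsum2 : w a + ∑ i ∈ F.erase a, w i = ∑ i ∈ F, w i :=
          Finset.add_sum_erase F w haF
        have hcarderase : (F.erase a).card = F.card - 1 := Finset.card_erase_of_mem haF
        have hsmul : ((F.erase a) \ D').card • (w a) ≤ ∑ i ∈ (F.erase a) \ D', w i :=
          Finset.card_nsmul_le_sum _ _ _
            (fun i hi => hamin i (Finset.erase_subset _ _ (Finset.mem_sdiff.mp hi).1))
        have hsdcard : ((F.erase a) \ D').card = F.card - 1 - j := by
          rw [Finset.card_sdiff_of_subset hD'F, hcarderase, hD'card]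
        have hsdsum : ∑ i ∈ (F.erase a) \ D', w i + ∑ i ∈ D', w i = ∑ i ∈ F.erase a, w i :=
          Finset.sum_sdiff hD'F
        rw [hsum1, ← hsum2]
        rw [hsdcard, nsmul_eq_mul] at hsmul
        have hcast : ((F.card - 1 - j : ℕ) : ℝ) = (F.card : ℝ) - 1 - j := by
          have : j + 1 ≤ F.card := hcard
          push_cast [Nat.cast_sub (by omega : j ≤ F.card - 1), Nat.cast_sub (by omega : 1 ≤ F.card)]
          ring
        rw [hcast] at hsmul
        have hD'cast : ((F.erase a).card : ℝ) = (F.card : ℝ) - 1 := by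
          rw [hcarderase]; push_cast [Nat.cast_sub (by omega : 1 ≤ F.card)]; ring
        rw [hD'cast] at hD'
        have hsd' : ((F.card : ℝ) - 1 - j) * w a ≤ ∑ i ∈ F.erase a, w i - ∑ i ∈ D', w i := by
          linarith [hsdsum, hsmul]
        push_cast
        nlinarith [hD', hsd']

lemma exists_piece_index (t : ℕ → EReal) (K : ℕ) (hK : 1 ≤ K) (ht0 : t 0 = ⊥)
    (htK : t K = ⊤) (hmono : Monotone t) (x : ℝ) :
    ∃ i, 1 ≤ i ∧ i ≤ K ∧ t (i - 1) < (x : EReal) ∧ (x : EReal) ≤ t i := by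
  set A : Set ℕ := {j | 1 ≤ j ∧ (x : EReal) ≤ t j} with hA
  have hmem : K ∈ A := ⟨hK, by rw [htK]; exact le_top⟩
  have hin : sInf A ∈ A := Nat.sInf_mem ⟨K, hmem⟩
  refine ⟨sInf A, hin.1, Nat.sInf_le hmem, ?_, hin.2⟩
  by_contra hcon
  rw [not_lt] at hcon
  rcases Nat.lt_or_ge (sInf A) 2 with h2 | h2
  · have h1 : sInf A = 1 := by have := hin.1; omega
    rw [h1, show (1:ℕ) - 1 = 0 from rfl, ht0] at hcon
    exact (EReal.bot_lt_coe x).not_ge hcon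
  · have hmem' : sInf A - 1 ∈ A := ⟨by omega, hcon⟩
    have := Nat.sInf_le hmem'
    omega


/-- For any `m, k ∈ ℕ` with `1 ≤ k ≤ m+1` and `g ∈ F_{m+1}(H)`,
`dist(g, F_k(H)) ≤ ((m+1) - k)/(m+1)`. -/
theorem dist_piecewise_to_fewer_pieces
    {Y : Type*} [MeasurableSpace Y] [Nonempty Y]
    (H : Set (ℝ → Y)) (hHne : H.Nonempty)
    (m k : ℕ) (hk1 : 1 ≤ k) (hk2 : k ≤ m + 1)
    (g : ℝ → Y) (hg : g ∈ Fclass H (m + 1)) :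
    distToClass g (Fclass H k) ≤ (((m : ℝ) + 1) - k) / ((m : ℝ) + 1) := by
  classical
  obtain ⟨t, h, ht0, htK, htmono', htreal, hhH, hgpw⟩ := hg
  have htmono : Monotone t := monotone_nat_of_le_succ htmono'
  set K := m + 1 with hKdef
  set I : ℕ → Set ℝ := fun i => {x : ℝ | t (i - 1) < (x : EReal) ∧ (x : EReal) ≤ t i} with hI
  have hImeas : ∀ i, MeasurableSet (I i) := by
    intro i
    have : I i = (fun x : ℝ => (x : EReal)) ⁻¹' (Set.Ioc (t (i - 1)) (t i)) := rfl
    rw [this]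
    exact continuous_coe_real_ereal.measurable measurableSet_Ioc
  set w : ℕ → ℝ := fun i => (volume (I i ∩ Set.Ioo (0:ℝ) 1)).toReal with hwdef
  have hwnonneg : ∀ i ∈ Finset.Icc 1 K, 0 ≤ w i := fun i _ => ENNReal.toReal_nonneg
  set F : Finset ℕ := Finset.Icc 1 K with hFdef
  have hFcard : F.card = K := by simp [hFdef, Nat.card_Icc]
  obtain ⟨D, hDF, hDcard, hDsum⟩ := exists_light_subset w (K - k) F hwnonneg (by omega)
  set S := F \ D with hSdef
  have hScard : S.card = k := by
    rw [hSdef, Finset.card_sdiff_of_subset hDF, hFcard, hDcard]; omega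
  have hSsub : S ⊆ F := Finset.sdiff_subset
  set e := S.orderEmbOfFin hScard with hedef
  set σ : ℕ → ℕ := fun j => if hj : 1 ≤ j ∧ j ≤ k then (e ⟨j - 1, by omega⟩ : ℕ) else 0 with hσdef
  have hσmem : ∀ j, 1 ≤ j → j ≤ k → σ j ∈ S := by
    intro j h1 h2
    simp only [hσdef]
    rw [dif_pos ⟨h1, h2⟩]
    exact Finset.orderEmbOfFin_mem _ _ _
  have hσIcc : ∀ j, 1 ≤ j → j ≤ k → 1 ≤ σ j ∧ σ j ≤ K := by
    intro j h1 h2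
    exact Finset.mem_Icc.mp (hSsub (hσmem j h1 h2))
  have hσmono : ∀ j j', 1 ≤ j → j < j' → j' ≤ k → σ j < σ j' := by
    intro j j' h1 hlt h2
    simp only [hσdef]
    rw [dif_pos ⟨h1, by omega⟩, dif_pos ⟨by omega, h2⟩]
    exact e.strictMono (by simp only [Fin.mk_lt_mk]; omega)
  have hσsurj : ∀ i ∈ S, ∃ j, 1 ≤ j ∧ j ≤ k ∧ σ j = i := by
    intro i hi
    have : i ∈ Set.range e := by
      rw [hedef, Finset.range_orderEmbOfFin]
      exact hi
    obtain ⟨a, ha⟩ := this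
    refine ⟨a + 1, by omega, by omega, ?_⟩
    simp only [hσdef]
    rw [dif_pos ⟨by omega, by omega⟩]
    rw [← ha]
    congr 1
  -- thresholds for the approximating function
  set s : ℕ → EReal := fun j => if j = 0 then ⊥ else if j < k then t (σ (j + 1) - 1) else ⊤
    with hsdef
  have hs0 : s 0 = ⊥ := by simp [hsdef]
  have hsk : s k = ⊤ := by
    simp only [hsdef]
    rw [if_neg (by omega), if_neg (by omega)]
  have hstop : ∀ j, k ≤ j → s j = ⊤ := by
    intro j hj
    simp only [hsdef]
    rw [if_neg (by omega), if_neg (by omega)]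
  have hsmono' : ∀ j, s j ≤ s (j + 1) := by
    intro j
    rcases Nat.eq_zero_or_pos j with rfl | hj
    · rw [hs0]; exact bot_le
    by_cases hjk : j < k
    · by_cases hjk1 : j + 1 < k
      · simp only [hsdef]
        rw [if_neg (by omega), if_pos hjk, if_neg (by omega), if_pos hjk1]
        have hσlt : σ (j + 1) < σ (j + 1 + 1) :=
          hσmono (j + 1) (j + 1 + 1) (by omega) (by omega) (by omega)
        exact htmono (by omega)
      · rw [hstop (j + 1) (by omega)]; exact le_top
    · rw [hstop j (by omega), hstop (j + 1) (by omega)]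
  have hsmono : Monotone s := monotone_nat_of_le_succ hsmono'
  have hsreal : ∀ j, 1 ≤ j → j ≤ k - 1 → ∃ r : ℝ, s j = (r : EReal) := by
    intro j h1 h2
    have hjk : j < k := by omega
    have hσlt : σ j < σ (j + 1) := hσmono j (j + 1) h1 (by omega) (by omega)
    have hσj1 := (hσIcc j h1 (by omega)).1
    have hσup := (hσIcc (j + 1) (by omega) (by omega)).2
    obtain ⟨r, hr⟩ := htreal (σ (j + 1) - 1) (by omega) (by omega)
    refine ⟨r, ?_⟩
    simp only [hsdef]
    rw [if_neg (by omega), if_pos hjk]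
    exact hr
  -- the approximating function
  set f : ℝ → Y := fun x => h (σ (sInf {j | 1 ≤ j ∧ (x : EReal) ≤ s j})) x with hfdef
  have hfval : ∀ (x : ℝ) (j : ℕ), 1 ≤ j → s (j - 1) < (x : EReal) → (x : EReal) ≤ s j →
      f x = h (σ j) x := by
    intro x j h1 hlow hup
    have hmem : j ∈ {j | 1 ≤ j ∧ (x : EReal) ≤ s j} := ⟨h1, hup⟩
    have hle : sInf {j | 1 ≤ j ∧ (x : EReal) ≤ s j} ≤ j := Nat.sInf_le hmem
    have hin : sInf {j | 1 ≤ j ∧ (x : EReal) ≤ s j} ∈ {j | 1 ≤ j ∧ (x : EReal) ≤ s j} :=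
      Nat.sInf_mem ⟨j, hmem⟩
    have heq : sInf {j | 1 ≤ j ∧ (x : EReal) ≤ s j} = j := by
      by_contra hne
      have hlt : sInf {j | 1 ≤ j ∧ (x : EReal) ≤ s j} < j := lt_of_le_of_ne hle hne
      have hxle : (x : EReal) ≤ s (j - 1) := le_trans hin.2 (hsmono (by omega))
      exact absurd hlow (not_lt.mpr hxle)
    simp only [hfdef, heq]
  have hfF : f ∈ Fclass H k := by
    refine ⟨s, fun i => h (σ i), hs0, hsk, hsmono', hsreal, ?_, ?_⟩
    · intro i h1 h2
      exact hhH (σ i) (hσIcc i h1 h2).1 (hσIcc i h1 h2).2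
    · intro x i h1 _ hlow hup
      exact hfval x i h1 hlow hup
  -- agreement on kept intervals
  have hagree : ∀ x : ℝ, ∀ i ∈ S, t (i - 1) < (x : EReal) → (x : EReal) ≤ t i → g x = f x := by
    intro x i hiS hlow hup
    obtain ⟨j, hj1, hjk, hσj⟩ := hσsurj i hiS
    obtain ⟨hi1, hi2⟩ := Finset.mem_Icc.mp (hSsub hiS)
    have hgx : g x = h i x := hgpw x i hi1 hi2 hlow hup
    have hlow' : s (j - 1) < (x : EReal) := by
      rcases Nat.lt_or_ge j 2 with hj2 | hj2
      · rw [show j - 1 = 0 from by omega, hs0]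
        exact EReal.bot_lt_coe x
      · have hseq : s (j - 1) = t (σ j - 1) := by
          simp only [hsdef]
          rw [if_neg (by omega), if_pos (by omega : j - 1 < k),
            show j - 1 + 1 = j from by omega]
        rw [hseq, hσj]
        exact hlow
    have hup' : (x : EReal) ≤ s j := by
      rcases Nat.lt_or_ge j k with hjk' | hjk'
      · have hσlt : σ j < σ (j + 1) := hσmono j (j + 1) hj1 (by omega) (by omega)
        have hts : t i ≤ s j := by
          simp only [hsdef]
          rw [if_neg (by omega), if_pos hjk', ← hσj]
          exact htmono (by omega)
        exact le_trans hup hts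
      · rw [hstop j hjk']; exact le_top
    rw [hgx, hfval x j hj1 hlow' hup', hσj]
  -- measure estimates
  have hIoovol : volume (Set.Ioo (0:ℝ) 1) = 1 := by
    rw [Real.volume_Ioo]; norm_num
  have hfin : ∀ i, volume (I i ∩ Set.Ioo (0:ℝ) 1) ≠ ⊤ := by
    intro i
    refine ne_top_of_le_ne_top ?_ (measure_mono Set.inter_subset_right)
    rw [hIoovol]; exact ENNReal.one_ne_top
  have hsub : {x : ℝ | x ∈ Set.Ioo (0:ℝ) 1 ∧ g x ≠ f x} ⊆
      ⋃ i ∈ D, (I i ∩ Set.Ioo (0:ℝ) 1) := by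
    intro x hx
    obtain ⟨i, hi1, hi2, hlow, hup⟩ :=
      exists_piece_index t K (by omega) ht0 htK htmono x
    have hiF : i ∈ F := Finset.mem_Icc.mpr ⟨hi1, hi2⟩
    have hiD : i ∈ D := by
      by_contra hiD
      exact hx.2 (hagree x i (Finset.mem_sdiff.mpr ⟨hiF, hiD⟩) hlow hup)
    exact Set.mem_biUnion hiD ⟨⟨hlow, hup⟩, hx.1⟩
  have hmeasle : volume {x : ℝ | x ∈ Set.Ioo (0:ℝ) 1 ∧ g x ≠ f x} ≤
      ∑ i ∈ D, volume (I i ∩ Set.Ioo (0:ℝ) 1) :=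
    (measure_mono hsub).trans (measure_biUnion_finset_le D _)
  have hdisjkey : ∀ i i' : ℕ, i < i' →
      Disjoint (I i ∩ Set.Ioo (0:ℝ) 1) (I i' ∩ Set.Ioo (0:ℝ) 1) := by
    intro i i' hlt
    rw [Set.disjoint_left]
    rintro x ⟨⟨_, hxi⟩, _⟩ ⟨⟨hxi', _⟩, _⟩
    exact absurd (le_trans hxi (htmono (by omega : i ≤ i' - 1))) (not_le.mpr hxi')
  have hdisj : (↑F : Set ℕ).PairwiseDisjoint (fun i => I i ∩ Set.Ioo (0:ℝ) 1) := by
    intro i _ i' _ hne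
    rcases hne.lt_or_gt with hl | hl
    · exact hdisjkey i i' hl
    · exact (hdisjkey i' i hl).symm
  have hsum1 : ∑ i ∈ F, volume (I i ∩ Set.Ioo (0:ℝ) 1) ≤ 1 := by
    rw [measure_biUnion_finset hdisj (fun i _ => (hImeas i).inter measurableSet_Ioo) |>.symm]
    calc volume (⋃ i ∈ F, I i ∩ Set.Ioo (0:ℝ) 1) ≤ volume (Set.Ioo (0:ℝ) 1) :=
          measure_mono (Set.iUnion₂_subset fun i _ => Set.inter_subset_right)
      _ = 1 := hIoovol
  have hwsum : ∑ i ∈ F, w i ≤ 1 := by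
    have : ∑ i ∈ F, w i = (∑ i ∈ F, volume (I i ∩ Set.Ioo (0:ℝ) 1)).toReal :=
      (ENNReal.toReal_sum (fun i _ => hfin i)).symm
    rw [this]
    calc (∑ i ∈ F, volume (I i ∩ Set.Ioo (0:ℝ) 1)).toReal ≤ (1 : ℝ≥0∞).toReal :=
          ENNReal.toReal_mono ENNReal.one_ne_top hsum1
      _ = 1 := by simp
  have hdistf : distP g f ≤ ∑ i ∈ D, w i := by
    have hsumDfin : ∑ i ∈ D, volume (I i ∩ Set.Ioo (0:ℝ) 1) ≠ ⊤ :=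
      (ENNReal.sum_lt_top.mpr fun i _ => lt_top_iff_ne_top.mpr (hfin i)).ne
    calc distP g f ≤ (∑ i ∈ D, volume (I i ∩ Set.Ioo (0:ℝ) 1)).toReal :=
          ENNReal.toReal_mono hsumDfin hmeasle
      _ = ∑ i ∈ D, w i := ENNReal.toReal_sum (fun i _ => hfin i)
  have hDnonneg : 0 ≤ ∑ i ∈ D, w i :=
    Finset.sum_nonneg fun i hi => hwnonneg i (hDF hi)
  have hfinal : ∑ i ∈ D, w i ≤ (((m : ℝ) + 1) - k) / ((m : ℝ) + 1) := by
    rw [le_div_iff₀ (by positivity : (0:ℝ) < (m : ℝ) + 1)]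
    rw [hFcard] at hDsum
    have hcast : ((K - k : ℕ) : ℝ) = (m : ℝ) + 1 - k := by
      rw [hKdef, Nat.cast_sub hk2]; push_cast [hKdef]; ring
    rw [hcast] at hDsum
    have hKcast : ((K : ℕ) : ℝ) = (m : ℝ) + 1 := by rw [hKdef]; push_cast; ring
    rw [hKcast] at hDsum
    have hksub : (0:ℝ) ≤ (m : ℝ) + 1 - k := by
      have : (k : ℝ) ≤ (m : ℝ) + 1 := by exact_mod_cast hk2
      linarith
    nlinarith [hDsum, hwsum, hDnonneg]
  have hbdd : BddBelow (Set.range fun g' : (Fclass H k) => distP g (g' : ℝ → Y)) := by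
    refine ⟨0, ?_⟩
    rintro _ ⟨g', rfl⟩
    exact ENNReal.toReal_nonneg
  calc distToClass g (Fclass H k) ≤ distP g f := ciInf_le hbdd ⟨f, hfF⟩
    _ ≤ _ := le_trans hdistf hfinal
end

section
/- Fix ε ∈ (0,1/2) and k ∈ ℕ with k ≥ 2. For any nonnegative integer m with m ≤ (k−1)(1 + ε/2), every function g' ∈ F_{m+1}(H) satisfies dist(g', F_k(H)) < ε/2. -/
open MeasureTheory Set

section MyAux

open scoped Classical

lemma myDistToClass_le {Y : Type*} (f g : ℝ → Y) (F : Set (ℝ → Y)) (hg : g ∈ F) :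
    distToClass f F ≤ distP f g :=
  ciInf_le ⟨0, by rintro x ⟨i, rfl⟩; exact ENNReal.toReal_nonneg⟩ (⟨g, hg⟩ : F)

lemma myExists_min_subset {ι : Type*} (s : Finset ι) (f : ι → ℝ) (d : ℕ) (hd : d ≤ s.card) :
    ∃ D ⊆ s, D.card = d ∧ ∀ i ∈ D, ∀ j ∈ s \ D, f i ≤ f j := by
  induction d with
  | zero => exact ⟨∅, Finset.empty_subset s, rfl, by simp⟩
  | succ d ih =>
    obtain ⟨D, hDs, hcard, hmin⟩ := ih (le_trans (Nat.le_succ d) hd)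
    have hne : (s \ D).Nonempty := by
      rw [← Finset.card_pos, Finset.card_sdiff_of_subset hDs]
      omega
    obtain ⟨i, hi, hims⟩ := Finset.exists_min_image (s \ D) f hne
    refine ⟨insert i D, Finset.insert_subset (Finset.mem_sdiff.mp hi).1 hDs, ?_, ?_⟩
    · rw [Finset.card_insert_of_notMem (Finset.mem_sdiff.mp hi).2, hcard]
    · intro x hx j hj
      have hj' : j ∈ s \ D := by
        rw [Finset.mem_sdiff] at hj ⊢
        exact ⟨hj.1, fun h => hj.2 (Finset.mem_insert_of_mem h)⟩
      rcases Finset.mem_insert.mp hx with rfl | hx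
      · exact hims j hj'
      · exact hmin x hx j hj'

lemma mySum_min_subset {ι : Type*} (s : Finset ι) (f : ι → ℝ)
    (d : ℕ) (hd : d ≤ s.card) :
    ∃ D ⊆ s, D.card = d ∧ (s.card : ℝ) * ∑ i ∈ D, f i ≤ (d : ℝ) * ∑ i ∈ s, f i := by
  obtain ⟨D, hDs, hcard, hmin⟩ := myExists_min_subset s f d hd
  refine ⟨D, hDs, hcard, ?_⟩
  have hsplit : ∑ i ∈ (s \ D), f i + ∑ i ∈ D, f i = ∑ i ∈ s, f i := Finset.sum_sdiff hDs
  have key : ((s.card - d : ℕ) : ℝ) * ∑ i ∈ D, f i ≤ (d : ℝ) * ∑ i ∈ (s \ D), f i := by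
    have h1 : ∀ j ∈ s \ D, ∑ i ∈ D, f i ≤ (d : ℝ) * f j := by
      intro j hj
      calc ∑ i ∈ D, f i ≤ D.card • f j :=
            Finset.sum_le_card_nsmul D f (f j) (fun i hi => hmin i hi j hj)
        _ = (d : ℝ) * f j := by rw [hcard, nsmul_eq_mul]
    calc ((s.card - d : ℕ) : ℝ) * ∑ i ∈ D, f i = ∑ _j ∈ s \ D, ∑ i ∈ D, f i := by
          rw [Finset.sum_const, Finset.card_sdiff_of_subset hDs, hcard, nsmul_eq_mul]
      _ ≤ ∑ j ∈ s \ D, (d : ℝ) * f j := Finset.sum_le_sum h1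
      _ = (d : ℝ) * ∑ j ∈ s \ D, f j := by rw [Finset.mul_sum]
  rw [Nat.cast_sub hd, sub_mul] at key
  rw [← hsplit, mul_add]
  linarith

lemma myExists_piece (t : ℕ → EReal) (h0 : t 0 = ⊥) {N : ℕ} (hN : t N = ⊤) (x : ℝ) :
    ∃ i, 1 ≤ i ∧ i ≤ N ∧ t (i - 1) < (x : EReal) ∧ (x : EReal) ≤ t i := by
  have hex : ∃ i, (x : EReal) ≤ t i := ⟨N, hN ▸ le_top⟩
  have hspec : (x : EReal) ≤ t (Nat.find hex) := Nat.find_spec hex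
  have h1 : 1 ≤ Nat.find hex := by
    rcases Nat.eq_zero_or_pos (Nat.find hex) with h | h
    · rw [h, h0] at hspec
      exact absurd (le_bot_iff.mp hspec) (EReal.coe_ne_bot x)
    · exact h
  refine ⟨Nat.find hex, h1, Nat.find_le (hN ▸ le_top), ?_, hspec⟩
  exact not_le.mp (Nat.find_min hex (by omega))

lemma myPiecewise_mono {Y : Type*} (H : Set (ℝ → Y)) {n k : ℕ} (hn : 1 ≤ n) (hnk : n ≤ k)
    {f : ℝ → Y} (hf : Piecewise H n f) : Piecewise H k f := by
  obtain ⟨t, h, ht0, htn, hstep, hreal, hmem, hpw⟩ := hf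
  have htm : Monotone t := monotone_nat_of_le_succ hstep
  set c : EReal := if n = 1 then ((0 : ℝ) : EReal) else t (n - 1) with hc
  have hcreal : ∃ r : ℝ, c = (r : EReal) := by
    rcases eq_or_ne n 1 with h1 | h1
    · exact ⟨0, by simp [hc, h1]⟩
    · simpa [hc, h1] using hreal (n - 1) (by omega) (by omega)
  have hclet : ∀ i ≤ n - 1, t i ≤ c := by
    intro i hi
    rcases eq_or_ne n 1 with h1 | h1
    · have hi0 : i = 0 := by omega
      simp [hi0, ht0]
    · simp only [hc, if_neg h1]; exact htm hi
  refine ⟨fun i => if i = 0 then ⊥ else if i ≤ n - 1 then t i else if i ≤ k - 1 then c else ⊤,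
    fun i => h (min i n), by simp, ?_, ?_, ?_, ?_, ?_⟩
  · simp only
    rw [if_neg (by omega : ¬ k = 0), if_neg (by omega : ¬ k ≤ n - 1),
      if_neg (by omega : ¬ k ≤ k - 1)]
  · intro i
    simp only
    by_cases hi0 : i = 0
    · simp [hi0]
    rw [if_neg hi0, if_neg (by omega : ¬ i + 1 = 0)]
    by_cases h1 : i + 1 ≤ n - 1
    · rw [if_pos (by omega : i ≤ n - 1), if_pos h1]
      exact htm (Nat.le_succ i)
    rw [if_neg h1]
    by_cases h2 : i ≤ n - 1
    · rw [if_pos h2]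
      by_cases h3 : i + 1 ≤ k - 1
      · rw [if_pos h3]; exact hclet i h2
      · rw [if_neg h3]; exact le_top
    · rw [if_neg h2]
      by_cases h3 : i ≤ k - 1
      · rw [if_pos h3]
        by_cases h4 : i + 1 ≤ k - 1
        · rw [if_pos h4]
        · rw [if_neg h4]; exact le_top
      · rw [if_neg h3, if_neg (by omega : ¬ i + 1 ≤ k - 1)]
  · intro i hi1 hik
    simp only
    rw [if_neg (by omega : ¬ i = 0)]
    by_cases h2 : i ≤ n - 1
    · rw [if_pos h2]; exact hreal i hi1 h2
    · rw [if_neg h2, if_pos hik]; exact hcreal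
  · intro i hi1 _
    exact hmem (min i n) (le_min hi1 hn) (min_le_right _ _)
  · intro x i hi1 hik hlt hle
    simp only at hlt hle
    refine hpw x (min i n) (le_min hi1 hn) (min_le_right _ _) ?_ ?_
    · -- t (min i n - 1) < ↑x
      by_cases h0 : i - 1 = 0
      · have : min i n - 1 = 0 := by omega
        rw [this, ht0]
        exact EReal.bot_lt_coe x
      rw [if_neg h0] at hlt
      by_cases h2 : i - 1 ≤ n - 1
      · rw [if_pos h2] at hlt
        have : min i n - 1 ≤ i - 1 := by omega
        exact lt_of_le_of_lt (htm this) hlt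
      · rw [if_neg h2] at hlt
        have hmin : min i n = n := by omega
        rw [hmin]
        by_cases h3 : i - 1 ≤ k - 1
        · rw [if_pos h3] at hlt
          exact lt_of_le_of_lt (hclet (n - 1) le_rfl) hlt
        · rw [if_neg h3] at hlt
          exact absurd hlt not_top_lt
    · -- ↑x ≤ t (min i n)
      by_cases h2 : i ≤ n - 1
      · rw [if_neg (by omega : ¬ i = 0), if_pos h2] at hle
        rw [min_eq_left (by omega : i ≤ n)]
        exact hle
      · have hmin : min i n = n := by omega
        rw [hmin, htn]
        exact le_top

end MyAux

open scoped Classical in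
/-- Fix `ε ∈ (0,1/2)` and `k ≥ 2`.  For any nonnegative integer `m` with
`m ≤ (k-1)(1 + ε/2)`, every `g' ∈ F_{m+1}(H)` satisfies `dist(g', F_k(H)) < ε/2`. -/
theorem dist_to_Fk_lt_half_eps
    {Y : Type*} [MeasurableSpace Y] [Nonempty Y]
    (H : Set (ℝ → Y)) (hHne : H.Nonempty)
    (ε : ℝ) (hε : ε ∈ Set.Ioo (0:ℝ) (1/2)) (k : ℕ) (hk : 2 ≤ k)
    (m : ℕ) (hm : (m : ℝ) ≤ ((k : ℝ) - 1) * (1 + ε / 2))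
    (g' : ℝ → Y) (hg' : g' ∈ Fclass H (m + 1)) :
    distToClass g' (Fclass H k) < ε / 2 := by
  classical
  obtain ⟨hε0, hε2⟩ := hε
  by_cases hcase : m + 1 ≤ k
  · have hg'' : g' ∈ Fclass H k := myPiecewise_mono H (by omega) hcase hg'
    have h0 : distP g' g' = 0 := by simp [distP]
    have := myDistToClass_le g' g' (Fclass H k) hg''
    rw [h0] at this
    linarith
  · push_neg at hcase
    have hkm : k ≤ m := by omega
    obtain ⟨t, h, ht0, htN, hstep, hreal, hmem, hpw⟩ := hg'
    simp only [Nat.add_sub_cancel] at hreal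
    have htm : Monotone t := monotone_nat_of_le_succ hstep
    set A : ℕ → Set ℝ :=
      fun i => ((↑) : ℝ → EReal) ⁻¹' (Set.Ioc (t (i - 1)) (t i)) ∩ Set.Ioo 0 1 with hA
    have hAmeas : ∀ i, MeasurableSet (A i) :=
      fun i => (measurable_coe_real_ereal measurableSet_Ioc).inter measurableSet_Ioo
    have hAdisj : ∀ i j, i < j → Disjoint (A i) (A j) := by
      intro i j hij
      rw [Set.disjoint_left]
      rintro x ⟨hx1, _⟩ ⟨hx2, _⟩
      rw [Set.mem_preimage, Set.mem_Ioc] at hx1 hx2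
      exact lt_irrefl _ (lt_of_le_of_lt (hx1.2.trans (htm (by omega : i ≤ j - 1))) hx2.1)
    have hcover : Set.Ioo (0:ℝ) 1 = ⋃ i ∈ Finset.Icc 1 (m + 1), A i := by
      ext x
      simp only [Set.mem_iUnion, Finset.mem_Icc, hA, Set.mem_inter_iff, Set.mem_preimage,
        Set.mem_Ioc]
      constructor
      · intro hx
        obtain ⟨i, h1, h2, h3, h4⟩ := myExists_piece t ht0 htN x
        exact ⟨i, ⟨h1, h2⟩, ⟨h3, h4⟩, hx⟩
      · rintro ⟨i, _, _, hx⟩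
        exact hx
    have hAle : ∀ i, volume (A i) ≤ 1 := by
      intro i
      calc volume (A i) ≤ volume (Set.Ioo (0:ℝ) 1) := measure_mono Set.inter_subset_right
        _ = 1 := by simp
    have hAfin : ∀ i, volume (A i) ≠ ⊤ := fun i => ne_top_of_le_ne_top ENNReal.one_ne_top (hAle i)
    set ℓ : ℕ → ℝ := fun i => (volume (A i)).toReal with hl
    have hlsum : ∑ i ∈ Finset.Icc 1 (m + 1), ℓ i = 1 := by
      rw [← ENNReal.toReal_sum (fun i _ => hAfin i)]
      rw [← measure_biUnion_finset
        (fun i _ j _ hij => hij.lt_or_gt.elim (hAdisj i j) (fun hh => (hAdisj j i hh).symm))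
        (fun i _ => hAmeas i)]
      rw [← hcover]
      simp
    have hcard : (Finset.Icc 1 (m + 1)).card = m + 1 := by
      rw [Nat.card_Icc]; omega
    obtain ⟨D, hDs, hDcard, hDsum⟩ := mySum_min_subset (Finset.Icc 1 (m + 1)) ℓ (m + 1 - k)
      (by rw [hcard]; omega)
    set K := Finset.Icc 1 (m + 1) \ D with hK
    have hKcard : K.card = k := by
      rw [hK, Finset.card_sdiff_of_subset hDs, hcard, hDcard]; omega
    set e := K.orderIsoOfFin hKcard with he
    set J : ℕ → ℕ := fun a => if ha : a - 1 < k then (e ⟨a - 1, ha⟩ : ℕ) else m + 2 + a with hJ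
    have hJK : ∀ a, 1 ≤ a → a ≤ k → J a ∈ K := by
      intro a h1 h2
      simp only [hJ]
      rw [dif_pos (by omega : a - 1 < k)]
      exact (e ⟨a - 1, by omega⟩).2
    have hJmem : ∀ a, 1 ≤ a → a ≤ k → 1 ≤ J a ∧ J a ≤ m + 1 := by
      intro a h1 h2
      have := hJK a h1 h2
      rw [hK, Finset.mem_sdiff, Finset.mem_Icc] at this
      exact this.1
    have hJmono : ∀ a b, 1 ≤ a → a < b → b ≤ k → J a < J b := by
      intro a b h1 hab h2
      simp only [hJ]
      rw [dif_pos (by omega : a - 1 < k), dif_pos (by omega : b - 1 < k)]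
      have hfin : (⟨a - 1, by omega⟩ : Fin k) < ⟨b - 1, by omega⟩ := by
        rw [Fin.mk_lt_mk]; omega
      exact_mod_cast e.strictMono hfin
    have hJsurj : ∀ j, j ∈ K → ∃ a, 1 ≤ a ∧ a ≤ k ∧ J a = j := by
      intro j hj
      obtain ⟨b, hb⟩ := e.surjective ⟨j, hj⟩
      refine ⟨(b : ℕ) + 1, by omega, by have := b.isLt; omega, ?_⟩
      simp only [hJ]
      rw [dif_pos (by have := b.isLt; omega : (b : ℕ) + 1 - 1 < k)]
      simp only [Nat.add_sub_cancel, Fin.eta, hb]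
    have hJlt : ∀ a, 1 ≤ a → a ≤ k - 1 → J a ≤ m := by
      intro a h1 h2
      have h3 := hJmono a k h1 (by omega) le_rfl
      have h4 := (hJmem k (by omega) le_rfl).2
      omega
    set s' : ℕ → EReal := fun a => if a = 0 then ⊥ else if a ≤ k - 1 then t (J a) else ⊤ with hs'
    have hs'mono : Monotone s' := by
      apply monotone_nat_of_le_succ
      intro a
      simp only [hs']
      by_cases h0 : a = 0
      · simp [h0]
      rw [if_neg h0, if_neg (by omega : ¬ a + 1 = 0)]
      by_cases h1 : a + 1 ≤ k - 1
      · rw [if_pos (by omega : a ≤ k - 1), if_pos h1]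
        exact htm (le_of_lt (hJmono a (a + 1) (by omega) (by omega) (by omega)))
      · rw [if_neg h1]
        split_ifs <;> exact le_top
    have hex : ∀ x : ℝ, ∃ a, (x : EReal) ≤ s' a := by
      intro x
      refine ⟨k, ?_⟩
      simp only [hs']
      rw [if_neg (by omega : ¬ k = 0), if_neg (by omega : ¬ k ≤ k - 1)]
      exact le_top
    set g : ℝ → Y := fun x => h (J (Nat.find (hex x))) x with hg
    have hgpiece : ∀ (x : ℝ) (a : ℕ), 1 ≤ a → a ≤ k → s' (a - 1) < (x : EReal) →
        (x : EReal) ≤ s' a → g x = h (J a) x := by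
      intro x a h1 h2 hlt hle
      have hfind : Nat.find (hex x) = a := by
        rw [Nat.find_eq_iff]
        exact ⟨hle, fun b hb hxb =>
          absurd (hxb.trans (hs'mono (by omega : b ≤ a - 1))) (not_le.mpr hlt)⟩
      simp only [hg, hfind]
    have hgmem : g ∈ Fclass H k := by
      refine ⟨s', fun a => h (J a), by simp [hs'], ?_, fun a => hs'mono (Nat.le_succ a), ?_, ?_, ?_⟩
      · simp only [hs']
        rw [if_neg (by omega : ¬ k = 0), if_neg (by omega : ¬ k ≤ k - 1)]
      · intro a h1 h2
        simp only [hs']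
        rw [if_neg (by omega : ¬ a = 0), if_pos h2]
        exact hreal (J a) (hJmem a h1 (by omega)).1 (hJlt a h1 h2)
      · intro a h1 h2
        exact hmem (J a) (hJmem a h1 h2).1 (hJmem a h1 h2).2
      · intro x a h1 h2 hlt hle
        exact hgpiece x a h1 h2 hlt hle
    have hErr : {x : ℝ | x ∈ Set.Ioo (0:ℝ) 1 ∧ g' x ≠ g x} ⊆ ⋃ i ∈ D, A i := by
      intro x hx
      obtain ⟨hx01, hne⟩ := hx
      by_contra hxD
      apply hne
      obtain ⟨i, h1, h2, h3, h4⟩ := myExists_piece t ht0 htN x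
      have hiD : i ∉ D := by
        intro hiD
        exact hxD (Set.mem_biUnion hiD ⟨Set.mem_preimage.mpr (Set.mem_Ioc.mpr ⟨h3, h4⟩), hx01⟩)
      have hiK : i ∈ K := by
        rw [hK, Finset.mem_sdiff, Finset.mem_Icc]
        exact ⟨⟨h1, h2⟩, hiD⟩
      obtain ⟨a, ha1, hak, hJa⟩ := hJsurj i hiK
      have hlt : s' (a - 1) < (x : EReal) := by
        simp only [hs']
        by_cases ha0 : a - 1 = 0
        · rw [if_pos ha0]
          exact EReal.bot_lt_coe x
        · rw [if_neg ha0, if_pos (by omega : a - 1 ≤ k - 1)]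
          have hJlt' : J (a - 1) < i := hJa ▸ hJmono (a - 1) a (by omega) (by omega) hak
          exact lt_of_le_of_lt (htm (by omega : J (a - 1) ≤ i - 1)) h3
      have hle : (x : EReal) ≤ s' a := by
        simp only [hs']
        rw [if_neg (by omega : ¬ a = 0)]
        by_cases hak1 : a ≤ k - 1
        · rw [if_pos hak1, hJa]
          exact h4
        · rw [if_neg hak1]
          exact le_top
      have hgx : g x = h i x := by rw [hgpiece x a ha1 hak hlt hle, hJa]
      rw [hpw x i h1 h2 h3 h4, hgx]
    have hdist : distP g' g ≤ ∑ i ∈ D, ℓ i := by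
      rw [distP]
      have h1 : volume {x : ℝ | x ∈ Set.Ioo (0:ℝ) 1 ∧ g' x ≠ g x} ≤ ∑ i ∈ D, volume (A i) :=
        le_trans (measure_mono hErr) (measure_biUnion_finset_le D A)
      have h2 : (∑ i ∈ D, volume (A i)).toReal = ∑ i ∈ D, ℓ i :=
        ENNReal.toReal_sum (fun i _ => hAfin i)
      rw [← h2]
      exact ENNReal.toReal_mono (ENNReal.sum_ne_top.mpr (fun i _ => hAfin i)) h1
    have hsumD : ∑ i ∈ D, ℓ i < ε / 2 := by
      rw [hlsum, hcard, mul_one] at hDsum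
      have hdcast : ((m + 1 - k : ℕ) : ℝ) = (m : ℝ) + 1 - (k : ℝ) := by
        push_cast [Nat.cast_sub (by omega : k ≤ m + 1)]
        ring
      rw [hdcast] at hDsum
      push_cast at hDsum
      have hk2 : (2 : ℝ) ≤ (k : ℝ) := by exact_mod_cast hk
      have hkm' : (k : ℝ) ≤ (m : ℝ) := by exact_mod_cast hkm
      by_contra hcon
      push_neg at hcon
      have h1 : (m : ℝ) + 1 - k ≤ ((k : ℝ) - 1) * (ε / 2) := by nlinarith [hm]
      have h2 : ((m : ℝ) + 1) * (ε / 2) ≤ ((m : ℝ) + 1) * ∑ i ∈ D, ℓ i :=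
        mul_le_mul_of_nonneg_left hcon (by positivity)
      have h3 : (0 : ℝ) < ((m : ℝ) + 2 - k) * ε := mul_pos (by linarith) hε0
      nlinarith [h1, h2, h3, hDsum]
    calc distToClass g' (Fclass H k) ≤ distP g' g := myDistToClass_le g' g (Fclass H k) hgmem
      _ ≤ ∑ i ∈ D, ℓ i := hdist
      _ < ε / 2 := hsumD
end

section
/- Suppose H has finite graph dimension d with 0 < d < ∞, and let k ∈ ℕ with k ≥ 1. For any n ∈ ℕ with n ≥ max(d, k), any n distinct points x₁, …, x_n ∈ ℝ, and any values y₁, …, y_n ∈ Y, the number of distinct sets of the form {(x, g(x)) : x ∈ ℝ} ∩ {(x₁,y₁), …, (x_n,y_n)} realized by functions g ∈ F_k(H) is at most (en/d)^{dk} · (en/k)^{k}. -/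
open MeasureTheory Set

/-! ### Auxiliary lemmas for Statement 14 -/

/-- The standard bound `∑_{i ≤ d} C(n,i) ≤ (e n / d)^d` for `1 ≤ d ≤ n`. -/
lemma sum_choose_le_pow_aux (n d : ℕ) (hd : 1 ≤ d) (hdn : d ≤ n) :
    (∑ i ∈ Finset.Iic d, (n.choose i : ℝ)) ≤ (Real.exp 1 * n / d) ^ d := by
  have hn0 : (0:ℝ) < n := by
    have h1 : (1:ℕ) ≤ n := hd.trans hdn
    exact_mod_cast Nat.lt_of_lt_of_le Nat.zero_lt_one h1
  have hd0 : (0:ℝ) < d := by exact_mod_cast hd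
  set q : ℝ := (d:ℝ) / n with hq
  have hq0 : 0 < q := by positivity
  have hq1 : q ≤ 1 := by
    rw [hq, div_le_one hn0]; exact_mod_cast hdn
  have key1 : q ^ d * ∑ i ∈ Finset.Iic d, (n.choose i : ℝ)
      ≤ ∑ i ∈ Finset.Iic d, q ^ i * (n.choose i : ℝ) := by
    rw [Finset.mul_sum]
    refine Finset.sum_le_sum fun i hi => ?_
    have hpow := pow_le_pow_of_le_one hq0.le hq1 (Finset.mem_Iic.1 hi)
    have hc : (0:ℝ) ≤ (n.choose i : ℝ) := by positivity
    exact mul_le_mul_of_nonneg_right hpow hc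
  have key2 : ∑ i ∈ Finset.Iic d, q ^ i * (n.choose i : ℝ)
      ≤ ∑ i ∈ Finset.range (n+1), q ^ i * (n.choose i : ℝ) := by
    refine Finset.sum_le_sum_of_subset_of_nonneg ?_ (fun i _ _ => by positivity)
    intro i hi
    simp only [Finset.mem_Iic] at hi
    exact Finset.mem_range.2 (Nat.lt_succ_of_le (hi.trans hdn))
  have key3 : ∑ i ∈ Finset.range (n+1), q ^ i * (n.choose i : ℝ) = (q + 1) ^ n := by
    rw [add_pow]
    refine Finset.sum_congr rfl fun i _ => by ring
  have key4 : (q + 1) ^ n ≤ Real.exp d := by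
    calc (q + 1) ^ n ≤ (Real.exp q) ^ n := by
          exact pow_le_pow_left₀ (by positivity) (Real.add_one_le_exp q) n
      _ = Real.exp (n * q) := (Real.exp_nat_mul q n).symm
      _ = Real.exp d := by
          congr 1
          rw [hq]
          field_simp [hn0.ne']
  have hfinal : q ^ d * ∑ i ∈ Finset.Iic d, (n.choose i : ℝ) ≤ Real.exp d :=
    (key1.trans key2).trans (key3 ▸ key4)
  have hqd : 0 < q ^ d := by positivity
  rw [← le_div_iff₀' hqd] at hfinal
  refine hfinal.trans (le_of_eq ?_)
  rw [hq, div_pow, div_pow, mul_pow, Real.exp_one_pow]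
  field_simp

/-- Encoding of the trace of a `k`-piecewise function on `n` (increasingly sorted) points:
a set `B` of "block starts" of size at most `k`, together with, for each block rank,
the trace of a single function from `H`. -/
lemma trace_encode_aux {Y : Type*} {H : Set (ℝ → Y)} (hHne : H.Nonempty) {k : ℕ} (hk : 1 ≤ k)
    {n : ℕ} (hn : 0 < n) (x : Fin n → ℝ) (hx : StrictMono x) (y : Fin n → Y)
    (g : ℝ → Y) (hg : Piecewise H k g) :
    ∃ (B : Finset (Fin n)) (f : ℕ → Finset (Fin n)),
      B.card ≤ k ∧
      (∀ r, ∃ h' ∈ H, ∀ i, (i ∈ f r ↔ h' (x i) = y i)) ∧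
      (∀ i, 1 ≤ (B.filter (fun b => b ≤ i)).card ∧ (B.filter (fun b => b ≤ i)).card ≤ k) ∧
      (∀ i, (g (x i) = y i ↔ i ∈ f ((B.filter (fun b => b ≤ i)).card))) := by
  classical
  obtain ⟨t, h, ht0, htk, -, -, hmemH, hpw⟩ := hg
  set S : Fin n → Set ℕ := fun i => {j | 1 ≤ j ∧ (x i : EReal) ≤ t j} with hS
  have hkS : ∀ i, k ∈ S i := fun i => ⟨hk, htk ▸ le_top⟩
  set ℓ : Fin n → ℕ := fun i => sInf (S i) with hℓ
  have hℓmem : ∀ i, ℓ i ∈ S i := fun i => Nat.sInf_mem ⟨k, hkS i⟩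
  have hℓ1 : ∀ i, 1 ≤ ℓ i := fun i => (hℓmem i).1
  have hℓle : ∀ i, (x i : EReal) ≤ t (ℓ i) := fun i => (hℓmem i).2
  have hℓk : ∀ i, ℓ i ≤ k := fun i => Nat.sInf_le (hkS i)
  have hgt : ∀ i, t (ℓ i - 1) < (x i : EReal) := by
    intro i
    rcases Nat.lt_or_ge (ℓ i) 2 with h2 | h2
    · have h1 : ℓ i = 1 := le_antisymm (by omega) (hℓ1 i)
      rw [h1]
      simpa [ht0] using EReal.bot_lt_coe (x i)
    · have hEq : sInf (S i) = ℓ i := rfl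
      have hlt : ℓ i - 1 < sInf (S i) := by omega
      have hnm := Nat.notMem_of_lt_sInf hlt
      rw [hS] at hnm
      simp only [Set.mem_setOf_eq, not_and] at hnm
      exact lt_of_not_ge (hnm (by omega))
  have hgi : ∀ i, g (x i) = h (ℓ i) (x i) := fun i =>
    hpw (x i) (ℓ i) (hℓ1 i) (hℓk i) (hgt i) (hℓle i)
  have hmono : Monotone ℓ := by
    intro i i' hii
    refine Nat.sInf_le ⟨hℓ1 i', le_trans ?_ (hℓle i')⟩
    exact_mod_cast hx.monotone hii
  set B : Finset (Fin n) := Finset.univ.filter (fun i => ∀ j, j < i → ℓ j < ℓ i) with hB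
  have h0B : (⟨0, hn⟩ : Fin n) ∈ B := by
    rw [hB, Finset.mem_filter]
    refine ⟨Finset.mem_univ _, fun j hj => ?_⟩
    exact absurd hj (by simp [Fin.lt_def])
  have hBlt : ∀ b ∈ B, ∀ j, j < b → ℓ j < ℓ b := by
    intro b hb
    rw [hB, Finset.mem_filter] at hb
    exact hb.2
  have hBcard : B.card ≤ k := by
    have hle : B.card ≤ (Finset.Icc 1 k).card := by
      refine Finset.card_le_card_of_injOn ℓ (fun b _ => Finset.mem_Icc.2 ⟨hℓ1 b, hℓk b⟩) ?_
      intro b hb b' hb' hbb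
      by_contra hne
      rcases lt_or_gt_of_ne hne with hlt | hlt
      · exact absurd hbb (Nat.ne_of_lt (hBlt b' hb' b hlt))
      · exact absurd hbb.symm (Nat.ne_of_lt (hBlt b hb b' hlt))
    simpa [Nat.card_Icc] using hle
  set ρ : Fin n → ℕ := fun i => (B.filter (fun b => b ≤ i)).card with hρ
  have hρ1 : ∀ i, 1 ≤ ρ i := by
    intro i
    refine Finset.card_pos.2 ⟨⟨0, hn⟩, Finset.mem_filter.2 ⟨h0B, ?_⟩⟩
    simp [Fin.le_def]
  have hρk : ∀ i, ρ i ≤ k :=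
    fun i => le_trans (Finset.card_le_card (Finset.filter_subset _ _)) hBcard
  have mainside : ∀ i i', i ≤ i' → ρ i = ρ i' → ℓ i' ≤ ℓ i := by
    intro i i' hii hr
    by_contra hlt
    push_neg at hlt
    set A : Finset (Fin n) := Finset.univ.filter (fun j => ℓ i < ℓ j ∧ j ≤ i') with hA
    have hAne : A.Nonempty := ⟨i', by simp [hA, hlt]⟩
    set c := A.min' hAne with hc
    have hcA : c ∈ A := A.min'_mem hAne
    rw [hA, Finset.mem_filter] at hcA
    obtain ⟨-, hcℓ, hci'⟩ := hcA
    have hic : i < c := by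
      by_contra hci
      push_neg at hci
      exact absurd (hmono hci) (not_le.2 hcℓ)
    have hcB : c ∈ B := by
      rw [hB, Finset.mem_filter]
      refine ⟨Finset.mem_univ _, fun j hj => ?_⟩
      have hji' : j ≤ i' := le_trans hj.le hci'
      have hjA : j ∉ A := fun hjA => absurd (A.min'_le j hjA) (not_le.2 hj)
      rw [hA, Finset.mem_filter] at hjA
      simp only [Finset.mem_univ, true_and, not_and] at hjA
      have hcon : ¬ (ℓ i < ℓ j) := fun hcon => hjA hcon hji'
      exact lt_of_le_of_lt (not_lt.1 hcon) hcℓ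
    have hss : B.filter (fun b => b ≤ i) ⊂ B.filter (fun b => b ≤ i') := by
      refine (Finset.ssubset_iff_of_subset ?_).2 ?_
      · intro b hb
        rw [Finset.mem_filter] at hb ⊢
        exact ⟨hb.1, le_trans hb.2 hii⟩
      · exact ⟨c, Finset.mem_filter.2 ⟨hcB, hci'⟩,
          fun hc' => absurd (Finset.mem_filter.1 hc').2 (not_le.2 hic)⟩
    exact absurd hr (Nat.ne_of_lt (Finset.card_lt_card hss))
  have hkey : ∀ i i', ρ i = ρ i' → ℓ i = ℓ i' := by
    intro i i' hr
    rcases le_total i i' with hc | hc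
    · exact le_antisymm (hmono hc) (mainside i i' hc hr)
    · exact le_antisymm (mainside i' i hc hr.symm) (hmono hc)
  obtain ⟨h₀, hh₀⟩ := hHne
  set f : ℕ → Finset (Fin n) := fun r =>
    if hr : (Finset.univ.filter (fun i => ρ i = r)).Nonempty then
      Finset.univ.filter
        (fun i' => h (ℓ ((Finset.univ.filter (fun i => ρ i = r)).min' hr)) (x i') = y i')
    else Finset.univ.filter (fun i' => h₀ (x i') = y i') with hf
  refine ⟨B, f, hBcard, ?_, fun i => ⟨hρ1 i, hρk i⟩, ?_⟩
  · intro r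
    by_cases hr : (Finset.univ.filter (fun i => ρ i = r)).Nonempty
    · refine ⟨h (ℓ ((Finset.univ.filter (fun i => ρ i = r)).min' hr)),
        hmemH _ (hℓ1 _) (hℓk _), fun i => ?_⟩
      rw [hf]
      simp only [dif_pos hr, Finset.mem_filter, Finset.mem_univ, true_and]
    · refine ⟨h₀, hh₀, fun i => ?_⟩
      rw [hf]
      simp only [dif_neg hr, Finset.mem_filter, Finset.mem_univ, true_and]
  · intro i
    show g (x i) = y i ↔ i ∈ f (ρ i)
    have hr : (Finset.univ.filter (fun i' => ρ i' = ρ i)).Nonempty :=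
      ⟨i, Finset.mem_filter.2 ⟨Finset.mem_univ _, rfl⟩⟩
    have hρ₀ : ρ ((Finset.univ.filter (fun i' => ρ i' = ρ i)).min' hr) = ρ i :=
      (Finset.mem_filter.1 (Finset.min'_mem _ hr)).2
    have hll : ℓ ((Finset.univ.filter (fun i' => ρ i' = ρ i)).min' hr) = ℓ i := hkey _ _ hρ₀
    have hfval : f (ρ i) = Finset.univ.filter (fun i' => h (ℓ i) (x i') = y i') := by
      rw [hf]
      simp only [dif_pos hr, hll]
    rw [hfval, Finset.mem_filter, hgi i]
    simp

/-- The main growth bound, for increasingly sorted points. -/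
lemma growth_aux
    {Y : Type*} [Nonempty Y]
    (H : Set (ℝ → Y)) (hHne : H.Nonempty)
    (d : ℕ) (hd : 0 < d)
    (hdim_le : ∀ S : Finset (ℝ × Y), ShattersC (graphs H) S → S.card ≤ d)
    (k : ℕ) (hk : 1 ≤ k)
    (n : ℕ) (hn : max d k ≤ n)
    (x : Fin n → ℝ) (hx : StrictMono x) (y : Fin n → Y) :
    (({E : Set (ℝ × Y) | ∃ g ∈ Fclass H k,
        E = graphOf g ∩ Set.range (fun i => (x i, y i))}.ncard : ℝ))
      ≤ (Real.exp 1 * n / d) ^ (d * k) * (Real.exp 1 * n / k) ^ k := by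
  classical
  have hdn : d ≤ n := le_trans (le_max_left _ _) hn
  have hkn : k ≤ n := le_trans (le_max_right _ _) hn
  have hn0 : 0 < n := lt_of_lt_of_le hd hdn
  set P : Fin n → ℝ × Y := fun i => (x i, y i) with hP
  have hPinj : Function.Injective P := fun i j hij => hx.injective (congrArg Prod.fst hij)
  set τ : (ℝ → Y) → Finset (Fin n) :=
    fun g => Finset.univ.filter (fun i => g (x i) = y i) with hτ
  set 𝔗 : Set (Finset (Fin n)) := {T | ∃ g ∈ Fclass H k, T = τ g} with h𝔗
  -- Step 1: the set of intersections is the image of the trace family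
  have hgraph : ∀ g : ℝ → Y, graphOf g ∩ Set.range P = P '' ↑(τ g) := by
    intro g
    ext p
    constructor
    · rintro ⟨hpg, i, rfl⟩
      exact ⟨i, by simp only [hτ, Finset.coe_filter, Set.mem_setOf_eq, Finset.mem_univ,
        true_and]; exact hpg.symm, rfl⟩
    · rintro ⟨i, hi, rfl⟩
      refine ⟨?_, ⟨i, rfl⟩⟩
      simp only [hτ, Finset.coe_filter, Set.mem_setOf_eq, Finset.mem_univ, true_and] at hi
      exact hi.symm
  have himg : {E : Set (ℝ × Y) | ∃ g ∈ Fclass H k, E = graphOf g ∩ Set.range P}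
      = (fun T : Finset (Fin n) => P '' ↑T) '' 𝔗 := by
    ext E
    constructor
    · rintro ⟨g, hg, rfl⟩
      exact ⟨τ g, ⟨g, hg, rfl⟩, (hgraph g).symm⟩
    · rintro ⟨T, ⟨g, hg, rfl⟩, rfl⟩
      exact ⟨g, hg, (hgraph g).symm⟩
  have hEle : {E : Set (ℝ × Y) | ∃ g ∈ Fclass H k,
      E = graphOf g ∩ Set.range P}.ncard ≤ 𝔗.ncard := by
    rw [himg]
    exact Set.ncard_image_le (Set.toFinite _)
  -- Step 2: the H-trace family and its Sauer-Shelah bound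
  set 𝒜 : Finset (Finset (Fin n)) :=
    Finset.univ.filter (fun A => ∃ h' ∈ H, A = τ h') with h𝒜
  have hvc : 𝒜.vcDim ≤ d := by
    refine Finset.sup_le fun s hs => ?_
    rw [Finset.mem_shatterer] at hs
    have hcard : (s.image P).card = s.card := Finset.card_image_of_injective s hPinj
    have hshat : ShattersC (graphs H) (s.image P) := by
      intro T hTS
      obtain ⟨uT, huTs, rfl⟩ := Finset.subset_image_iff.1 hTS
      obtain ⟨A, hA𝒜, hsA⟩ := hs huTs
      obtain ⟨h', hh'H, rfl⟩ := (Finset.mem_filter.1 hA𝒜).2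
      refine ⟨graphOf h', ⟨h', hh'H, rfl⟩, ?_⟩
      ext p
      simp only [Finset.coe_image, Set.mem_inter_iff, Set.mem_image, Finset.mem_coe,
        graphOf, Set.mem_setOf_eq]
      constructor
      · rintro ⟨⟨i, hi, rfl⟩, hpg⟩
        refine ⟨i, ?_, rfl⟩
        rw [← hsA]
        refine Finset.mem_inter.2 ⟨hi, ?_⟩
        simp only [hτ, Finset.mem_filter, Finset.mem_univ, true_and]
        exact hpg.symm
      · rintro ⟨i, hi, rfl⟩
        rw [← hsA] at hi
        obtain ⟨his, hiτ⟩ := Finset.mem_inter.1 hi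
        simp only [hτ, Finset.mem_filter, Finset.mem_univ, true_and] at hiτ
        exact ⟨⟨i, his, rfl⟩, hiτ.symm⟩
    have hSd := hdim_le (s.image P) hshat
    omega
  have h𝒜card : 𝒜.card ≤ ∑ i ∈ Finset.Iic d, n.choose i := by
    calc 𝒜.card ≤ 𝒜.shatterer.card := Finset.card_le_card_shatterer _
      _ ≤ ∑ i ∈ Finset.Iic 𝒜.vcDim, (Fintype.card (Fin n)).choose i :=
          Finset.card_shatterer_le_sum_vcDim
      _ ≤ ∑ i ∈ Finset.Iic d, n.choose i := by
          rw [Fintype.card_fin]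
          exact Finset.sum_le_sum_of_subset (Finset.Iic_subset_Iic.2 hvc)
  -- Step 3: encode each piecewise trace
  have henc : ∀ T ∈ 𝔗, ∃ (B : Finset (Fin n)) (f : ℕ → Finset (Fin n)),
      B.card ≤ k ∧ (∀ r, f r ∈ 𝒜) ∧
      (∀ i, 1 ≤ (B.filter (fun b => b ≤ i)).card ∧ (B.filter (fun b => b ≤ i)).card ≤ k) ∧
      (∀ i, (i ∈ T ↔ i ∈ f ((B.filter (fun b => b ≤ i)).card))) := by
    rintro T ⟨g, hg, rfl⟩
    obtain ⟨B, f, hBc, hf, hrnk, hdec⟩ := trace_encode_aux hHne hk hn0 x hx y g hg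
    refine ⟨B, f, hBc, ?_, hrnk, ?_⟩
    · intro r
      obtain ⟨h', hh'H, hfr⟩ := hf r
      refine Finset.mem_filter.2 ⟨Finset.mem_univ _, h', hh'H, ?_⟩
      ext i
      simp only [hτ, Finset.mem_filter, Finset.mem_univ, true_and]
      exact hfr i
    · intro i
      rw [← hdec i]
      simp only [hτ, Finset.mem_filter, Finset.mem_univ, true_and]
  choose! B f hBc hf𝒜 hrnk hdec using henc
  -- Step 4: injection into pairs (block-start set, block traces)
  have hcount : 𝔗.ncard ≤ (Finset.univ.filter
      (fun B : Finset (Fin n) => B.card ≤ k)).card * 𝒜.card ^ k := by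
    set Φ : 𝔗 → ({B : Finset (Fin n) // B.card ≤ k} × (Fin k → {A : Finset (Fin n) // A ∈ 𝒜})) := fun T =>
      (⟨B (T : Finset (Fin n)), hBc _ T.2⟩,
       fun r => ⟨f (T : Finset (Fin n)) ((r : ℕ) + 1), hf𝒜 _ T.2 _⟩) with hΦ
    have hΦinj : Function.Injective Φ := by
      intro T T' hTT'
      have hBeq : B (T : Finset (Fin n)) = B (T' : Finset (Fin n)) :=
        congrArg (fun p : ({B : Finset (Fin n) // B.card ≤ k} ×
          (Fin k → {A : Finset (Fin n) // A ∈ 𝒜})) => (p.1 : Finset (Fin n))) hTT'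
      have hfeq : ∀ r : Fin k, f (T : Finset (Fin n)) ((r : ℕ) + 1)
          = f (T' : Finset (Fin n)) ((r : ℕ) + 1) := by
        intro r
        have := congrFun (congrArg Prod.snd hTT') r
        exact congrArg Subtype.val this
      refine Subtype.ext (Finset.ext fun i => ?_)
      set r := ((B (T : Finset (Fin n))).filter (fun b => b ≤ i)).card with hr
      have h1r := (hrnk _ T.2 i).1
      have hrk := (hrnk _ T.2 i).2
      have hfr : f (T : Finset (Fin n)) r = f (T' : Finset (Fin n)) r := by
        have hcast : (((⟨r - 1, by omega⟩ : Fin k) : ℕ)) + 1 = r := by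
          simp only []
          omega
        have := hfeq ⟨r - 1, by omega⟩
        rwa [hcast] at this
      have hd1 := hdec _ T.2 i
      have hd2 := hdec _ T'.2 i
      rw [← hr] at hd1
      rw [← hBeq, ← hr] at hd2
      rw [hd1, hd2, hfr]
    calc 𝔗.ncard = Nat.card 𝔗 := (Nat.card_coe_set_eq 𝔗).symm
      _ ≤ Nat.card ({B : Finset (Fin n) // B.card ≤ k} ×
            (Fin k → {A : Finset (Fin n) // A ∈ 𝒜})) :=
          Nat.card_le_card_of_injective Φ hΦinj
      _ = Fintype.card ({B : Finset (Fin n) // B.card ≤ k} ×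
            (Fin k → {A : Finset (Fin n) // A ∈ 𝒜})) := Nat.card_eq_fintype_card
      _ = (Finset.univ.filter (fun B : Finset (Fin n) => B.card ≤ k)).card * 𝒜.card ^ k := by
          rw [Fintype.card_prod, Fintype.card_fun, Fintype.card_coe, Fintype.card_fin,
            Fintype.card_subtype]
  -- Step 5: counting small subsets
  have hBcnt : (Finset.univ.filter (fun B : Finset (Fin n) => B.card ≤ k)).card
      ≤ ∑ j ∈ Finset.Iic k, n.choose j := by
    calc (Finset.univ.filter (fun B : Finset (Fin n) => B.card ≤ k)).card
        ≤ ((Finset.Iic k).biUnion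
            (fun j => Finset.powersetCard j (Finset.univ : Finset (Fin n)))).card := by
          refine Finset.card_le_card fun A hA => ?_
          exact Finset.mem_biUnion.2 ⟨A.card, Finset.mem_Iic.2 (Finset.mem_filter.1 hA).2,
            Finset.mem_powersetCard_univ.2 rfl⟩
      _ ≤ ∑ j ∈ Finset.Iic k, (Finset.powersetCard j (Finset.univ : Finset (Fin n))).card :=
          Finset.card_biUnion_le
      _ = ∑ j ∈ Finset.Iic k, n.choose j := by
          refine Finset.sum_congr rfl fun j _ => ?_
          rw [Finset.card_powersetCard, Finset.card_univ, Fintype.card_fin]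
  -- Step 6: put everything together
  have hNat : 𝔗.ncard ≤ (∑ j ∈ Finset.Iic k, n.choose j)
      * (∑ i ∈ Finset.Iic d, n.choose i) ^ k :=
    hcount.trans (Nat.mul_le_mul hBcnt (Nat.pow_le_pow_left h𝒜card k))
  have hsumk := sum_choose_le_pow_aux n k hk hkn
  have hsumd := sum_choose_le_pow_aux n d hd hdn
  have hsumd0 : (0:ℝ) ≤ ∑ i ∈ Finset.Iic d, (n.choose i : ℝ) := by positivity
  calc (({E : Set (ℝ × Y) | ∃ g ∈ Fclass H k,
        E = graphOf g ∩ Set.range (fun i => (x i, y i))}.ncard : ℝ))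
      ≤ (𝔗.ncard : ℝ) := by exact_mod_cast hEle
    _ ≤ (∑ j ∈ Finset.Iic k, (n.choose j : ℝ))
        * (∑ i ∈ Finset.Iic d, (n.choose i : ℝ)) ^ k := by
          have := hNat
          push_cast
          exact_mod_cast this
    _ ≤ (Real.exp 1 * n / k) ^ k * ((Real.exp 1 * n / d) ^ d) ^ k := by
          refine mul_le_mul hsumk (pow_le_pow_left₀ hsumd0 hsumd k) (by positivity) (by positivity)
    _ = (Real.exp 1 * n / d) ^ (d * k) * (Real.exp 1 * n / k) ^ k := by
          rw [← pow_mul]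
          ring

/-- If `H` has graph dimension `d` (`0 < d < ∞`) and `k ≥ 1`, then for
`n ≥ max(d, k)` distinct points `x₁, …, xₙ ∈ ℝ` and values `y₁, …, yₙ ∈ Y`, the number of
distinct sets `{(x, g(x)) : x ∈ ℝ} ∩ {(x₁,y₁), …, (xₙ,yₙ)}` realized by `g ∈ F_k(H)` is at
most `(en/d)^(dk) · (en/k)^k`. -/
theorem growth_of_piecewise_class
    {Y : Type*} [MeasurableSpace Y] [Nonempty Y]
    (H : Set (ℝ → Y)) (hHne : H.Nonempty)
    (d : ℕ) (hd : 0 < d)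
    (hdim_le : ∀ S : Finset (ℝ × Y), ShattersC (graphs H) S → S.card ≤ d)
    (hdim_ge : ∃ S : Finset (ℝ × Y), S.card = d ∧ ShattersC (graphs H) S)
    (k : ℕ) (hk : 1 ≤ k)
    (n : ℕ) (hn : max d k ≤ n)
    (x : Fin n → ℝ) (hx : Function.Injective x) (y : Fin n → Y) :
    (({E : Set (ℝ × Y) | ∃ g ∈ Fclass H k,
        E = graphOf g ∩ Set.range (fun i => (x i, y i))}.ncard : ℝ))
      ≤ (Real.exp 1 * n / d) ^ (d * k) * (Real.exp 1 * n / k) ^ k := by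
  classical
  set σ := Tuple.sort x with hσ
  have hmono : Monotone (x ∘ σ) := Tuple.monotone_sort x
  have hsm : StrictMono (x ∘ σ) :=
    hmono.strictMono_of_injective (hx.comp σ.injective)
  have hrange : Set.range (fun i => ((x ∘ σ) i, (y ∘ σ) i))
      = Set.range (fun i => (x i, y i)) := by
    ext p
    constructor
    · rintro ⟨i, rfl⟩
      exact ⟨σ i, rfl⟩
    · rintro ⟨i, rfl⟩
      exact ⟨σ.symm i, by simp⟩
  have hmain := growth_aux H hHne d hd hdim_le k hk n hn (x ∘ σ) hsm (y ∘ σ)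
  rw [hrange] at hmain
  exact hmain
end

section
/- Suppose H has finite graph dimension d with 0 < d < ∞, and let k ∈ ℕ with k ≥ 1. Then the graph dimension of F_k(H) is at most 4·d·k·log₂(2ek). -/
open MeasureTheory Set

section Aux
open Finset
open scoped Classical

lemma trace_card_le {α : Type*} [DecidableEq α] (𝒜 : Finset (Finset α)) (S : Finset α) (d : ℕ)
    (hsub : ∀ A ∈ 𝒜, A ⊆ S)
    (hvc : ∀ B : Finset α, 𝒜.Shatters B → B.card ≤ d) :
    𝒜.card ≤ ∑ i ∈ Finset.range (d+1), S.card.choose i := by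
  refine (Finset.card_le_card_shatterer 𝒜).trans ?_
  simp_rw [← Finset.card_powersetCard]
  refine (Finset.card_le_card fun s hs ↦ Finset.mem_biUnion.2 ⟨s.card, ?_⟩).trans
    Finset.card_biUnion_le
  rw [Finset.mem_shatterer] at hs
  obtain ⟨u, hu, hsu⟩ := hs.exists_superset
  exact ⟨Finset.mem_range.2 (Nat.lt_succ_of_le (hvc s hs)),
    Finset.mem_powersetCard.2 ⟨hsu.trans (hsub u hu), rfl⟩⟩

lemma log_le_div_exp {y : ℝ} (hy : 0 < y) : Real.log y ≤ y / Real.exp 1 := by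
  have h := Real.log_le_sub_one_of_pos (x := y / Real.exp 1) (by positivity)
  rw [Real.log_div (ne_of_gt hy) (by positivity), Real.log_exp] at h
  linarith


lemma sum_choose_le (m d : ℕ) (hd : 1 ≤ d) (hdm : d ≤ m) :
    (∑ i ∈ Finset.range (d+1), (m.choose i : ℝ)) ≤ (Real.exp 1 * m / d)^d := by
  have hm0 : (0:ℝ) < m := by exact_mod_cast lt_of_lt_of_le hd hdm
  have hd0 : (0:ℝ) < d := by exact_mod_cast hd
  set x : ℝ := d / m with hx
  have hx0 : 0 < x := by positivity
  have hx1 : x ≤ 1 := by rw [hx, div_le_one hm0]; exact_mod_cast hdm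
  have key : (∑ i ∈ Finset.range (d+1), (m.choose i : ℝ)) * x^d ≤ Real.exp 1 ^ d := by
    calc (∑ i ∈ Finset.range (d+1), (m.choose i : ℝ)) * x^d
        = ∑ i ∈ Finset.range (d+1), (m.choose i : ℝ) * x^d := by rw [Finset.sum_mul]
      _ ≤ ∑ i ∈ Finset.range (d+1), (m.choose i : ℝ) * x^i := by
          refine Finset.sum_le_sum fun i hi => ?_
          have : x ^ d ≤ x ^ i :=
            pow_le_pow_of_le_one (le_of_lt hx0) hx1 (Nat.le_of_lt_succ (mem_range.1 hi))
          exact mul_le_mul_of_nonneg_left this (by positivity)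
      _ ≤ ∑ i ∈ Finset.range (m+1), (m.choose i : ℝ) * x^i := by
          refine Finset.sum_le_sum_of_subset_of_nonneg ?_ (fun i _ _ => by positivity)
          exact Finset.range_subset_range.2 (by omega)
      _ = (x + 1)^m := by
          rw [add_pow]
          refine Finset.sum_congr rfl fun i hi => ?_
          rw [one_pow, mul_one, mul_comm]
      _ ≤ (Real.exp x)^m := by
          refine pow_le_pow_left₀ (by positivity) ?_ m
          have := Real.add_one_le_exp x
          linarith
      _ = Real.exp (x * m) := by rw [← Real.exp_nat_mul]; ring_nf
      _ = Real.exp 1 ^ d := by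
          rw [hx, div_mul_cancel₀ _ (ne_of_gt hm0), ← Real.exp_nat_mul, mul_one]
  have hxd : 0 < x ^ d := by positivity
  rw [← le_div_iff₀ hxd] at key
  refine key.trans (le_of_eq ?_)
  rw [div_pow, mul_div_assoc, mul_pow, div_pow, div_div_eq_mul_div]
  ring

set_option maxHeartbeats 2000000 in
lemma endgame (m d k : ℕ) (hd : 1 ≤ d) (hk : 1 ≤ k) (hm : 4*d < m)
    (h : (2:ℝ)^m ≤ ((m:ℝ)+1)^(k-1) * ((Real.exp 1 * m / d)^d)^k) :
    (m:ℝ) ≤ 4*d*k*Real.logb 2 (2*Real.exp 1*k) := by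
  have e1 := Real.exp_one_gt_d9
  have e2 := Real.exp_one_lt_d9
  have l1 := Real.log_two_gt_d9
  have l2 := Real.log_two_lt_d9
  have hlog2 : 0 < Real.log 2 := by linarith
  set E := Real.exp 1 with hE
  have hE0 : (0:ℝ) < E := by linarith
  have hM0 : (0:ℝ) < m := by exact_mod_cast (by omega : 0 < m)
  have hD0 : (0:ℝ) < d := by exact_mod_cast hd
  have hK0 : (0:ℝ) < k := by exact_mod_cast hk
  have hD1 : (1:ℝ) ≤ d := by exact_mod_cast hd
  have hK1 : (1:ℝ) ≤ k := by exact_mod_cast hk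
  have hMD : 4 * (d:ℝ) < m := by exact_mod_cast hm
  set L := Real.logb 2 with hL
  have hLmul : ∀ x y : ℝ, 0 < x → 0 < y → L (x*y) = L x + L y :=
    fun x y hx hy => Real.logb_mul hx.ne' hy.ne'
  have hLmono : ∀ x y : ℝ, 0 < x → x ≤ y → L x ≤ L y :=
    fun x y hx hxy => Real.logb_le_logb_of_le one_lt_two hx hxy
  have hL2 : L 2 = 1 := Real.logb_self_eq_one one_lt_two
  have hLnn : ∀ x : ℝ, 1 ≤ x → 0 ≤ L x := fun x hx => Real.logb_nonneg one_lt_two hx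
  set s : ℝ := (m:ℝ)/(d:ℝ) with hs
  have hs4 : 4 < s := by rw [hs, lt_div_iff₀ hD0]; linarith
  have hMds : (m:ℝ) = d * s := by rw [hs]; field_simp
  have hLs0 : 0 ≤ L s := hLnn s (by linarith)
  have hLk0 : 0 ≤ L k := hLnn _ hK1
  have hLE0 : 0 ≤ L E := hLnn _ (by linarith)
  -- Step 1 : take logs
  have hEs0 : 0 < E * s := by positivity
  have hstep1 : (m:ℝ) ≤ ((k-1:ℕ):ℝ) * L ((m:ℝ)+1) + (d:ℝ)*(k:ℝ) * L (E*s) := by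
    have hlhs : L ((2:ℝ)^m) = (m:ℝ) := by
      rw [hL, Real.logb_pow, Real.logb_self_eq_one one_lt_two, mul_one]
    have hpos1 : (0:ℝ) < ((m:ℝ)+1)^(k-1) := by positivity
    have hpos2 : (0:ℝ) < ((E * m / d)^d)^k := by positivity
    have hrhs : L (((m:ℝ)+1)^(k-1) * ((E * m / d)^d)^k)
        = ((k-1:ℕ):ℝ) * L ((m:ℝ)+1) + (d:ℝ)*(k:ℝ) * L (E*s) := by
      rw [hLmul _ _ hpos1 hpos2, hL, Real.logb_pow, Real.logb_pow, Real.logb_pow]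
      have : E * (m:ℝ) / (d:ℝ) = E * s := by rw [hs, mul_div_assoc]
      rw [this]; ring
    calc (m:ℝ) = L ((2:ℝ)^m) := hlhs.symm
      _ ≤ L (((m:ℝ)+1)^(k-1) * ((E * m / d)^d)^k) := hLmono _ _ (by positivity) h
      _ = _ := hrhs
  -- Step 2 : bound L (m+1) ≤ d + L s
  have hLd : L (d:ℝ) ≤ (d:ℝ) - 1 := by
    have h2 : (d:ℝ) ≤ 2^(d-1 : ℕ) := by
      have := Nat.lt_two_pow_self (n := d-1)
      have : d ≤ 2^(d-1) := by omega
      exact_mod_cast this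
    calc L (d:ℝ) ≤ L (2^(d-1:ℕ)) := hLmono _ _ hD0 h2
      _ = ((d-1:ℕ):ℝ) := by rw [hL, Real.logb_pow, Real.logb_self_eq_one one_lt_two, mul_one]
      _ = (d:ℝ) - 1 := by rw [Nat.cast_sub hd]; norm_num
  have hLm1 : L ((m:ℝ)+1) ≤ (d:ℝ) + L s := by
    calc L ((m:ℝ)+1) ≤ L (2*(m:ℝ)) := hLmono _ _ (by linarith) (by linarith)
      _ = 1 + L (d:ℝ) + L s := by
          rw [hLmul 2 (m:ℝ) (by norm_num) hM0, hMds, hLmul _ _ hD0 (by linarith), hL2]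
          ring
      _ ≤ (d:ℝ) + L s := by linarith
  -- Step 3 : s ≤ k * L(2E) + 2 k L s
  have hLEs : L (E*s) = L E + L s := hLmul _ _ hE0 (by linarith)
  have hkcast : ((k-1:ℕ):ℝ) = (k:ℝ) - 1 := by rw [Nat.cast_sub hk]; norm_num
  have hstep3 : s ≤ (k:ℝ) * (1 + L E) + 2*(k:ℝ)*(L s) := by
    have hds : (d:ℝ) * s ≤ (d:ℝ) * ((k:ℝ) * (1 + L E) + 2*(k:ℝ)*(L s)) := by
      rw [← hMds]
      calc (m:ℝ) ≤ ((k:ℝ)-1) * ((d:ℝ) + L s) + (d:ℝ)*(k:ℝ) * (L E + L s) := by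
            rw [← hkcast, ← hLEs]
            refine hstep1.trans ?_
            have := mul_le_mul_of_nonneg_left hLm1 (by rw [hkcast]; linarith : (0:ℝ) ≤ ((k-1:ℕ):ℝ))
            linarith
        _ ≤ (d:ℝ) * ((k:ℝ) * (1 + L E) + 2*(k:ℝ)*(L s)) := by nlinarith [mul_nonneg (mul_nonneg (by linarith : (0:ℝ) ≤ (d:ℝ)-1) (by linarith : (0:ℝ) ≤ (k:ℝ))) hLs0]
    exact le_of_mul_le_mul_left (by linarith) hD0
  -- Step 4 : L s ≤ L (4k) + s/(4 k E log 2)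
  have hLdivexp : ∀ y : ℝ, 0 < y → L y ≤ y / (E * Real.log 2) := by
    intro y hy
    have h1 := log_le_div_exp hy
    rw [hL, ← Real.log_div_log]
    calc Real.log y / Real.log 2 ≤ (y / E) / Real.log 2 := by gcongr
      _ = y / (E * Real.log 2) := by rw [div_div]
  set c := E * Real.log 2 with hc
  have hc0 : 0 < c := by positivity
  have hclb : 1.8841 ≤ c := by
    rw [hc]
    have h1 : (2.7182818283:ℝ) * 0.6931471803 ≤ E * Real.log 2 :=
      mul_le_mul e1.le l1.le (by norm_num) (by linarith)
    norm_num at h1 ⊢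
    linarith [h1]
  have hL4 : L 4 = 2 := by
    rw [hL, show (4:ℝ) = 2^(2:ℕ) by norm_num, Real.logb_pow, Real.logb_self_eq_one one_lt_two]
    norm_num
  have hL4k : L (4*(k:ℝ)) = 2 + L (k:ℝ) := by
    rw [hLmul 4 _ (by norm_num) hK0, hL4]
  have hstep4 : L s ≤ 2 + L (k:ℝ) + s / (4*(k:ℝ)*c) := by
    have hsk0 : 0 < s/(4*(k:ℝ)) := by positivity
    have hsplit : L s = L (4*(k:ℝ)) + L (s/(4*(k:ℝ))) := by
      rw [← hLmul _ _ (by positivity) hsk0]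
      congr 1
      field_simp
    have h4 := hLdivexp _ hsk0
    have hdd : s/(4*(k:ℝ))/(E * Real.log 2) = s/(4*(k:ℝ)*c) := by rw [hc, div_div]
    rw [hdd] at h4
    rw [hsplit, hL4k]
    linarith
  have hterm : 2*(k:ℝ) * (s/(4*(k:ℝ)*c)) = s * (1/(2*c)) := by
    field_simp
    ring
  have hstep5 : s * (1 - 1/(2*c)) ≤ (k:ℝ)*(1 + L E) + 2*(k:ℝ)*(2 + L (k:ℝ)) := by
    have h2 := mul_le_mul_of_nonneg_left hstep4 (by linarith : (0:ℝ) ≤ 2*(k:ℝ))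
    have h3 : 2*(k:ℝ)*(L s) ≤ 2*(k:ℝ)*(2 + L (k:ℝ)) + s*(1/(2*c)) := by
      calc 2*(k:ℝ)*(L s) ≤ 2*(k:ℝ)*(2 + L (k:ℝ) + s/(4*(k:ℝ)*c)) := h2
        _ = 2*(k:ℝ)*(2 + L (k:ℝ)) + 2*(k:ℝ)*(s/(4*(k:ℝ)*c)) := by ring
        _ = 2*(k:ℝ)*(2 + L (k:ℝ)) + s*(1/(2*c)) := by rw [hterm]
    have h4 : s*(1 - 1/(2*c)) = s - s*(1/(2*c)) := by ring
    linarith [hstep3, h3]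
  have hLEval : L E = 1 / Real.log 2 := by
    rw [hL, ← Real.log_div_log, hE, Real.log_exp]
  have ha : 2.4426 ≤ 1 + L E := by
    have h1 : 1.4426 ≤ 1 / Real.log 2 := by
      rw [le_div_iff₀ hlog2]
      nlinarith [l2]
    rw [hLEval]
    linarith
  have hg : 1/(2*c) ≤ 0.2654 := by
    rw [div_le_iff₀ (by positivity)]
    nlinarith [hclb, hc0]
  have hγ0 : (0:ℝ) < 1 - 1/(2*c) := by linarith
  have hstep6 : (k:ℝ)*(1 + L E) + 2*(k:ℝ)*(2 + L (k:ℝ))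
      ≤ (1 - 1/(2*c)) * (4*(k:ℝ)*((1 + L E) + L (k:ℝ))) := by
    have hred : (1 + L E) + 4 + 2*(L (k:ℝ)) ≤ (1-(1/(2*c)))*(4*((1 + L E)+L (k:ℝ))) := by
      nlinarith [mul_nonneg (by linarith : (0:ℝ) ≤ 0.2654 - 1/(2*c))
          (by linarith : (0:ℝ) ≤ (1 + L E) - 2.4426),
        mul_nonneg (by linarith : (0:ℝ) ≤ 0.2654 - 1/(2*c)) hLk0]
    calc (k:ℝ)*(1 + L E) + 2*(k:ℝ)*(2 + L (k:ℝ))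
        = (k:ℝ)*((1 + L E) + 4 + 2*(L (k:ℝ))) := by ring
      _ ≤ (k:ℝ)*((1-(1/(2*c)))*(4*((1 + L E)+L (k:ℝ)))) :=
          mul_le_mul_of_nonneg_left hred (le_of_lt hK0)
      _ = (1 - 1/(2*c)) * (4*(k:ℝ)*((1 + L E) + L (k:ℝ))) := by ring
  have hsfinal : s ≤ 4*(k:ℝ)*((1 + L E) + L (k:ℝ)) := by
    have h5 := hstep5.trans hstep6
    have h6 : s * (1 - 1/(2*c)) ≤ (4*(k:ℝ)*((1 + L E) + L (k:ℝ))) * (1 - 1/(2*c)) := by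
      linarith
    exact le_of_mul_le_mul_right h6 hγ0
  have hL2Ek : L (2*E*(k:ℝ)) = (1 + L E) + L (k:ℝ) := by
    rw [hLmul _ _ (by positivity) hK0, hLmul 2 E (by norm_num) hE0, hL2]
  rw [hMds]
  calc (d:ℝ)*s ≤ (d:ℝ)*(4*(k:ℝ)*((1 + L E) + L (k:ℝ))) :=
        mul_le_mul_of_nonneg_left hsfinal hD0.le
    _ = 4*(d:ℝ)*(k:ℝ)*L (2*E*(k:ℝ)) := by rw [hL2Ek]; ring

end Aux

section Counting
open Finset in
open scoped Classical in
theorem _dummy_open : True := trivial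
open scoped Classical
variable {Y : Type*}

/-- The set of patterns traced on `S` by graphs of members of `H`. -/
noncomputable def patterns (H : Set (ℝ → Y)) (S : Finset (ℝ × Y)) : Finset (Finset (ℝ × Y)) :=
  S.powerset.filter (fun P => ∃ h ∈ H, P = S.filter (fun p => p.2 = h p.1))

lemma counting (H : Set (ℝ → Y)) (k : ℕ) (hk : 1 ≤ k)
    (S : Finset (ℝ × Y)) (hS : ShattersC (graphs (Fclass H k)) S) :
    2 ^ S.card ≤ (S.card + 1) ^ (k - 1) * (patterns H S).card ^ k := by
  classical
  set m := S.card with hm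
  -- rank of a point
  set rank : ℝ × Y → ℕ := fun p => (S.filter (fun q => q.1 ≤ p.1)).card with hrank
  -- extract witnesses
  have h1 : ∀ T : Finset (ℝ × Y), T ∈ S.powerset →
      ∃ (f : ℝ → Y) (t : ℕ → EReal) (h : ℕ → ℝ → Y),
        t 0 = ⊥ ∧ t k = ⊤ ∧ (∀ i : ℕ, t i ≤ t (i + 1)) ∧
        (∀ i : ℕ, 1 ≤ i → i ≤ k → h i ∈ H) ∧
        (∀ x : ℝ, ∀ i : ℕ, 1 ≤ i → i ≤ k →
          t (i - 1) < (x : EReal) → (x : EReal) ≤ t i → f x = h i x) ∧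
        (S : Set (ℝ × Y)) ∩ graphOf f = (T : Set (ℝ × Y)) := by
    intro T hT
    obtain ⟨c, hc, hcap⟩ := hS T (Finset.mem_powerset.1 hT)
    obtain ⟨f, hf, rfl⟩ := hc
    obtain ⟨t, h, ht0, htk, hmono, _, hmem, hpiece⟩ := hf
    exact ⟨f, t, h, ht0, htk, hmono, hmem, hpiece, hcap⟩
  choose f tfun hfun ht0 htk hmono hmem hpiece hgraph using h1
  -- the crossing counts
  set cfun : ∀ T ∈ S.powerset, ℕ → ℕ := fun T hT j =>
    (S.filter (fun q => (q.1 : EReal) ≤ tfun T hT j)).card with hcfun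
  -- Key1 : threshold comparisons are determined by crossing counts
  have key1 : ∀ T hT (p : ℝ × Y), p ∈ S → ∀ j : ℕ,
      (tfun T hT j < (p.1 : EReal) ↔ cfun T hT j < rank p) := by
    intro T hT p hp j
    constructor
    · intro hlt
      apply Finset.card_lt_card
      rw [Finset.ssubset_iff_of_subset]
      · exact ⟨p, Finset.mem_filter.2 ⟨hp, le_refl _⟩,
          fun hmem' => absurd ((Finset.mem_filter.1 hmem').2.trans_lt hlt) (lt_irrefl _)⟩
      · intro q hq
        rw [Finset.mem_filter] at hq ⊢
        refine ⟨hq.1, ?_⟩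
        have : (q.1 : EReal) < (p.1 : EReal) := hq.2.trans_lt hlt
        exact_mod_cast this.le
    · intro hlt
      by_contra hcon
      push_neg at hcon
      refine absurd hlt (not_lt.2 (Finset.card_le_card ?_))
      intro q hq
      rw [Finset.mem_filter] at hq ⊢
      refine ⟨hq.1, ?_⟩
      calc (q.1 : EReal) ≤ (p.1 : EReal) := by exact_mod_cast hq.2
        _ ≤ tfun T hT j := hcon
  -- the piece-selector function, defined from an encoded crossing-count vector
  set P : (Fin (k-1) → Fin (m+1)) → (ℝ × Y) → ℕ → Prop := fun v p i =>
    i = k ∨ ∀ hi : i - 1 < k - 1, rank p ≤ (v ⟨i - 1, hi⟩ : ℕ) with hP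
  have Pk : ∀ v p, P v p k := fun v p => Or.inl rfl
  set σ : (Fin (k-1) → Fin (m+1)) → (ℝ × Y) → ℕ := fun v p =>
    ((Finset.Icc 1 k).filter (P v p)).min' ⟨k, Finset.mem_filter.2 ⟨Finset.mem_Icc.2 ⟨hk, le_refl k⟩, Pk v p⟩⟩ with hσ
  -- encoders
  have cle : ∀ T hT j, cfun T hT j < m + 1 :=
    fun T hT j => Nat.lt_succ_of_le (Finset.card_filter_le _ _)
  set enc1 : ∀ T : Finset (ℝ × Y), T ∈ S.powerset → (Fin (k-1) → Fin (m+1)) :=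
    fun T hT j => ⟨cfun T hT (j.val + 1), cle T hT _⟩ with henc1
  have hmem2 : ∀ T hT (i : Fin k),
      S.filter (fun q => q.2 = hfun T hT (i.val + 1) q.1) ∈ patterns H S := by
    intro T hT i
    refine Finset.mem_filter.2 ⟨Finset.mem_powerset.2 (Finset.filter_subset _ _),
      ⟨hfun T hT (i.val + 1), hmem T hT (i.val + 1) (by omega) (by omega), rfl⟩⟩
  set enc2 : ∀ T : Finset (ℝ × Y), T ∈ S.powerset → (Fin k → {Pt // Pt ∈ patterns H S}) :=
    fun T hT i => ⟨_, hmem2 T hT i⟩ with henc2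
  -- key properties of the selector
  have keyσ : ∀ T hT (p : ℝ × Y), p ∈ S →
      1 ≤ σ (enc1 T hT) p ∧ σ (enc1 T hT) p ≤ k ∧
      ((p.2 = f T hT p.1) ↔ p.2 = hfun T hT (σ (enc1 T hT) p) p.1) := by
    intro T hT p hp
    set s0 := σ (enc1 T hT) p with hs0
    have hmm : s0 ∈ (Finset.Icc 1 k).filter (P (enc1 T hT) p) := Finset.min'_mem _ _
    rw [Finset.mem_filter, Finset.mem_Icc] at hmm
    obtain ⟨⟨hs1, hsk⟩, hPs⟩ := hmm
    have hcfun_eq : ∀ i : ℕ, 1 ≤ i → i < k → ∀ hi : i - 1 < k - 1,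
        ((enc1 T hT ⟨i - 1, hi⟩ : Fin (m+1)) : ℕ) = cfun T hT i := by
      intro i h1i hik hi
      simp only [henc1]
      congr 1
      omega
    -- upper: p.1 ≤ t s0
    have hle : (p.1 : EReal) ≤ tfun T hT s0 := by
      rcases eq_or_lt_of_le hsk with heq | hlt
      · rw [heq, htk]; exact le_top
      · rcases hPs with h | h
        · omega
        · have hi : s0 - 1 < k - 1 := by omega
          have := h hi
          rw [hcfun_eq s0 hs1 hlt hi] at this
          exact not_lt.1 (fun hc => absurd ((key1 T hT p hp s0).1 hc) (not_lt.2 this))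
    -- lower: t (s0 - 1) < p.1
    have hgt : tfun T hT (s0 - 1) < (p.1 : EReal) := by
      rcases eq_or_lt_of_le hs1 with heq | hlt
      · rw [← heq]
        norm_num
        rw [ht0]
        exact bot_lt_iff_ne_bot.2 (by simp)
      · have hnm : s0 - 1 ∉ (Finset.Icc 1 k).filter (P (enc1 T hT) p) := by
          intro hmem'
          have h3 : s0 ≤ s0 - 1 := Finset.min'_le _ _ hmem'
          omega
        rw [Finset.mem_filter, Finset.mem_Icc] at hnm
        push_neg at hnm
        have hPn := hnm ⟨by omega, by omega⟩
        simp only [hP] at hPn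
        push_neg at hPn
        obtain ⟨_, hi, hcv⟩ := hPn
        rw [hcfun_eq (s0 - 1) (by omega) (by omega) hi] at hcv
        exact (key1 T hT p hp (s0 - 1)).2 hcv
    exact ⟨hs1, hsk, by rw [hpiece T hT p.1 s0 hs1 hsk hgt hle]⟩
  -- reconstruction
  set R : (Fin (k-1) → Fin (m+1)) × (Fin k → {Pt // Pt ∈ patterns H S}) → Finset (ℝ × Y) :=
    fun vw => S.filter (fun p => ∃ hlt : σ vw.1 p - 1 < k, p ∈ (vw.2 ⟨σ vw.1 p - 1, hlt⟩).val) with hR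
  have hrecon : ∀ T hT, R (enc1 T hT, enc2 T hT) = T := by
    intro T hT
    have hTS : T ⊆ S := Finset.mem_powerset.1 hT
    ext p
    constructor
    · intro hpR
      rw [hR] at hpR
      simp only [Finset.mem_filter] at hpR
      obtain ⟨hp, hlt, hpw⟩ := hpR
      obtain ⟨hs1, hsk, hiff⟩ := keyσ T hT p hp
      simp only [henc2, Finset.mem_filter] at hpw
      rw [show σ (enc1 T hT) p - 1 + 1 = σ (enc1 T hT) p by omega] at hpw
      have hpT : p ∈ (S : Set (ℝ × Y)) ∩ graphOf (f T hT) := ⟨hp, hiff.2 hpw.2⟩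
      rw [hgraph T hT] at hpT
      exact_mod_cast hpT
    · intro hpT
      have hp : p ∈ S := hTS hpT
      obtain ⟨hs1, hsk, hiff⟩ := keyσ T hT p hp
      have hpG : p ∈ (S : Set (ℝ × Y)) ∩ graphOf (f T hT) := by
        rw [hgraph T hT]; exact_mod_cast hpT
      have hpf : p.2 = f T hT p.1 := hpG.2
      rw [hR]
      simp only [Finset.mem_filter]
      refine ⟨hp, by omega, ?_⟩
      simp only [henc2, Finset.mem_filter]
      rw [show σ (enc1 T hT) p - 1 + 1 = σ (enc1 T hT) p by omega]
      exact ⟨hp, hiff.1 hpf⟩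
  -- injection and cardinality count
  set Ψ : {T : Finset (ℝ × Y) // T ∈ S.powerset} →
      (Fin (k-1) → Fin (m+1)) × (Fin k → {Pt // Pt ∈ patterns H S}) :=
    fun T => (enc1 T.val T.property, enc2 T.val T.property) with hΨ
  have hinj : Function.Injective Ψ := by
    intro a b hab
    apply Subtype.ext
    have ha := hrecon a.val a.property
    have hb := hrecon b.val b.property
    rw [hΨ] at hab
    simp only at hab
    rw [← ha, ← hb, hab]
  have hcard := Fintype.card_le_of_injective Ψ hinj
  rw [Fintype.card_coe, Finset.card_powerset] at hcard
  calc 2 ^ m ≤ _ := hcard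
    _ = (m + 1) ^ (k - 1) * (patterns H S).card ^ k := by
        rw [Fintype.card_prod, Fintype.card_fun, Fintype.card_fun, Fintype.card_fin,
          Fintype.card_fin, Fintype.card_fin, Fintype.card_coe]
end Counting


/-- If `H` has graph dimension `d` (`0 < d < ∞`) and `k ≥ 1`, then the
graph dimension of `F_k(H)` is at most `4·d·k·log₂(2ek)`: every finite subset of `ℝ × Y`
shattered by the graphs of `F_k(H)` has at most `4·d·k·log₂(2ek)` points. -/
theorem graph_dimension_piecewise_le
    {Y : Type*} [MeasurableSpace Y] [Nonempty Y]
    (H : Set (ℝ → Y)) (hHne : H.Nonempty)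
    (d : ℕ) (hd : 0 < d)
    (hdim_le : ∀ S : Finset (ℝ × Y), ShattersC (graphs H) S → S.card ≤ d)
    (hdim_ge : ∃ S : Finset (ℝ × Y), S.card = d ∧ ShattersC (graphs H) S)
    (k : ℕ) (hk : 1 ≤ k) :
    ∀ S : Finset (ℝ × Y), ShattersC (graphs (Fclass H k)) S →
      (S.card : ℝ) ≤ 4 * d * k * Real.logb 2 (2 * Real.exp 1 * k) := by
    classical
  intro S hS
  set m := S.card with hm
  by_cases hcase : m ≤ 4 * d
  · -- small case
    have hL1 : (1:ℝ) ≤ Real.logb 2 (2 * Real.exp 1 * k) := by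
      have h2 : (2:ℝ) ≤ 2 * Real.exp 1 * k := by
        have he : (1:ℝ) ≤ Real.exp 1 := by linarith [Real.exp_one_gt_d9]
        have hk1 : (1:ℝ) ≤ k := by exact_mod_cast hk
        nlinarith
      calc (1:ℝ) = Real.logb 2 2 := (Real.logb_self_eq_one one_lt_two).symm
        _ ≤ _ := Real.logb_le_logb_of_le one_lt_two (by norm_num) h2
    have hd1 : (1:ℝ) ≤ d := by exact_mod_cast hd
    have hk1 : (1:ℝ) ≤ k := by exact_mod_cast hk
    have hm4 : (m:ℝ) ≤ 4 * d := by exact_mod_cast hcase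
    have hkL : (1:ℝ) ≤ (k:ℝ) * Real.logb 2 (2 * Real.exp 1 * k) := by
      nlinarith [mul_le_mul hk1 hL1 (by norm_num : (0:ℝ) ≤ 1) (by linarith : (0:ℝ) ≤ (k:ℝ))]
    have h4 : 4*(d:ℝ) ≤ 4*(d:ℝ)*((k:ℝ) * Real.logb 2 (2 * Real.exp 1 * k)) := by
      nlinarith [mul_nonneg (by linarith : (0:ℝ) ≤ (d:ℝ))
        (by linarith : (0:ℝ) ≤ (k:ℝ) * Real.logb 2 (2 * Real.exp 1 * k) - 1)]
    calc (m:ℝ) ≤ 4*d := hm4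
      _ ≤ 4*(d:ℝ)*((k:ℝ) * Real.logb 2 (2 * Real.exp 1 * k)) := h4
      _ = 4*d*k*Real.logb 2 (2*Real.exp 1*k) := by ring
  · push_neg at hcase
    have hcount := counting H k hk S hS
    -- Sauer bound on patterns
    have hpat_sub : ∀ A ∈ patterns H S, A ⊆ S := by
      intro A hA
      exact Finset.mem_powerset.1 (Finset.mem_filter.1 hA).1
    have hvc : ∀ B : Finset (ℝ × Y), (patterns H S).Shatters B → B.card ≤ d := by
      intro B hB
      apply hdim_le
      intro T hT
      obtain ⟨u, hu, hBu⟩ := hB hT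
      obtain ⟨h, hhH, rfl⟩ := (Finset.mem_filter.1 hu).2
      have hBS : B ⊆ S := by
        obtain ⟨u', hu', hBu'⟩ := hB.exists_superset
        exact hBu'.trans (hpat_sub u' hu')
      refine ⟨graphOf h, ⟨h, hhH, rfl⟩, ?_⟩
      rw [← hBu]
      ext p
      simp only [Finset.coe_inter, Set.mem_inter_iff, Finset.mem_coe, Finset.coe_filter,
        Set.mem_setOf_eq, graphOf, Finset.mem_filter]
      constructor
      · rintro ⟨hpB, hpg⟩
        exact ⟨hpB, hBS hpB, hpg⟩
      · rintro ⟨hpB, _, hpg⟩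
        exact ⟨hpB, hpg⟩
    have hsauer : (patterns H S).card ≤ ∑ i ∈ Finset.range (d+1), m.choose i :=
      trace_card_le (patterns H S) S d hpat_sub hvc
    -- to the reals
    have hdm : d ≤ m := by omega
    have hsum := sum_choose_le m d hd hdm
    have hNr : ((patterns H S).card : ℝ) ≤ (Real.exp 1 * m / d)^d := by
      calc ((patterns H S).card : ℝ) ≤ ((∑ i ∈ Finset.range (d+1), m.choose i : ℕ) : ℝ) := by
            exact_mod_cast hsauer
        _ = ∑ i ∈ Finset.range (d+1), (m.choose i : ℝ) := by push_cast; ring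
        _ ≤ (Real.exp 1 * m / d)^d := hsum
    have hreal : (2:ℝ)^m ≤ ((m:ℝ)+1)^(k-1) * ((Real.exp 1 * m / d)^d)^k := by
      have h1 : (2:ℝ)^m ≤ ((m:ℝ)+1)^(k-1) * (((patterns H S).card : ℝ))^k := by
        exact_mod_cast hcount
      refine h1.trans ?_
      have h2 : (((patterns H S).card : ℝ))^k ≤ ((Real.exp 1 * m / d)^d)^k :=
        pow_le_pow_left₀ (by positivity) hNr k
      have h3 : (0:ℝ) ≤ ((m:ℝ)+1)^(k-1) := by positivity
      exact mul_le_mul_of_nonneg_left h2 h3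
    exact endgame m d k hd hk hcase hreal
end

section
/- Let n ∈ ℕ and let f : ℝ → {0,1} be the indicator function of a union of n+1 closed intervals. Then there exists a function g : ℝ → {0,1} that is the indicator function of a union of n closed intervals such that dist(f, g) ≤ 1/(n+1), where dist is measured under the uniform distribution on (0,1). -/
open MeasureTheory Set

/-- If `f` is the indicator function of a union of `n+1` closed
intervals, then there is an indicator function `g` of a union of `n` closed intervals
with `dist(f, g) ≤ 1/(n+1)` under the uniform distribution on `(0,1)`. -/
theorem union_of_intervals_reduce_one
    (n : ℕ) (a b : Fin (n + 1) → ℝ) :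
    ∃ c d : Fin n → ℝ,
      distP ((⋃ i, Set.Icc (a i) (b i)).indicator (fun _ => (1:ℝ)))
            ((⋃ i, Set.Icc (c i) (d i)).indicator (fun _ => (1:ℝ)))
        ≤ 1 / ((n : ℝ) + 1) := by
  classical
  set E : Fin (n + 1) → Set ℝ := fun i =>
    Set.Ioo (0:ℝ) 1 ∩ Set.Icc (a i) (b i) ∩
      (⋃ j ∈ Finset.univ.erase i, Set.Icc (a j) (b j))ᶜ with hE
  have hmeas : ∀ i, MeasurableSet (E i) := by
    intro i
    refine (measurableSet_Ioo.inter measurableSet_Icc).inter (MeasurableSet.compl ?_)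
    exact MeasurableSet.biUnion (Finset.univ.erase i).countable_toSet
      (fun j _ => measurableSet_Icc)
  have hdisj : Pairwise (Function.onFun Disjoint E) := by
    intro i j hij
    rw [Function.onFun, Set.disjoint_left]
    rintro x ⟨⟨hx1, hx2⟩, hx3⟩ ⟨⟨hy1, hy2⟩, hy3⟩
    exact hy3 (Set.mem_biUnion
      (Finset.mem_coe.2 (Finset.mem_erase.2 ⟨hij, Finset.mem_univ i⟩)) hx2)
  have hsum : ∑ i, volume (E i) ≤ 1 := by
    have h := measure_iUnion (μ := volume) hdisj hmeas
    rw [tsum_fintype] at h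
    rw [← h]
    calc volume (⋃ i, E i)
        ≤ volume (Set.Ioo (0:ℝ) 1) :=
          measure_mono (Set.iUnion_subset fun i x hx => hx.1.1)
      _ = 1 := by simp
  obtain ⟨i, -, hi⟩ := Finset.exists_min_image Finset.univ (fun i => volume (E i))
    Finset.univ_nonempty
  have hile : volume (E i) ≤ 1 / ((n : ENNReal) + 1) := by
    have h1 : Finset.univ.card • volume (E i) ≤ ∑ j, volume (E j) :=
      Finset.card_nsmul_le_sum Finset.univ _ _ (fun j _ => hi j (Finset.mem_univ j))
    rw [Finset.card_univ, Fintype.card_fin, nsmul_eq_mul] at h1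
    have h2 : volume (E i) * ((n : ENNReal) + 1) ≤ 1 := by
      rw [mul_comm]
      calc ((n : ENNReal) + 1) * volume (E i) = ((n + 1 : ℕ) : ENNReal) * volume (E i) := by
            push_cast; ring_nf
        _ ≤ ∑ j, volume (E j) := h1
        _ ≤ 1 := hsum
    rw [ENNReal.le_div_iff_mul_le (Or.inl (by simp)) (Or.inl (by simp))]
    exact h2
  refine ⟨fun j => a (i.succAbove j), fun j => b (i.succAbove j), ?_⟩
  have hsub : {x : ℝ | x ∈ Set.Ioo (0:ℝ) 1 ∧
      (⋃ j, Set.Icc (a j) (b j)).indicator (fun _ => (1:ℝ)) x ≠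
      (⋃ j, Set.Icc (a (i.succAbove j)) (b (i.succAbove j))).indicator
        (fun _ => (1:ℝ)) x} ⊆ E i := by
    rintro x ⟨hx01, hne⟩
    have hU' : x ∉ ⋃ j, Set.Icc (a (i.succAbove j)) (b (i.succAbove j)) := by
      intro hx
      obtain ⟨j, hj⟩ := Set.mem_iUnion.1 hx
      have hU : x ∈ ⋃ j, Set.Icc (a j) (b j) := Set.mem_iUnion.2 ⟨i.succAbove j, hj⟩
      exact hne (by rw [Set.indicator_of_mem hU, Set.indicator_of_mem hx])
    have hU : x ∈ ⋃ j, Set.Icc (a j) (b j) := by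
      by_contra h
      exact hne (by rw [Set.indicator_of_notMem h, Set.indicator_of_notMem hU'])
    obtain ⟨j, hj⟩ := Set.mem_iUnion.1 hU
    have hji : j = i := by
      by_contra hne'
      obtain ⟨j', rfl⟩ := Fin.exists_succAbove_eq hne'
      exact hU' (Set.mem_iUnion.2 ⟨j', hj⟩)
    refine ⟨⟨hx01, hji ▸ hj⟩, ?_⟩
    intro hx
    simp only [Set.mem_iUnion, Finset.mem_coe, Finset.mem_erase, exists_prop] at hx
    obtain ⟨k, ⟨hki, -⟩, hk⟩ := hx
    obtain ⟨k', rfl⟩ := Fin.exists_succAbove_eq hki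
    exact hU' (Set.mem_iUnion.2 ⟨k', hk⟩)
  have hle : volume {x : ℝ | x ∈ Set.Ioo (0:ℝ) 1 ∧
      (⋃ j, Set.Icc (a j) (b j)).indicator (fun _ => (1:ℝ)) x ≠
      (⋃ j, Set.Icc (a (i.succAbove j)) (b (i.succAbove j))).indicator
        (fun _ => (1:ℝ)) x} ≤ 1 / ((n : ENNReal) + 1) :=
    (measure_mono hsub).trans hile
  have htop : (1 / ((n : ENNReal) + 1)) ≠ ⊤ := by
    simp [ENNReal.div_eq_top]
  calc distP _ _ ≤ (1 / ((n : ENNReal) + 1)).toReal := ENNReal.toReal_mono htop hle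
    _ = 1 / ((n : ℝ) + 1) := by
        rw [ENNReal.toReal_div, ENNReal.toReal_add (by simp) (by simp)]
        simp
end
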